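/- arXiv:2604.12093 — 6 statements merged into one kernel-verified Lean document; each statement's English description precedes it below -/
import Mathlib

section
/- Assume: (i) hat_theta_n -> theta_0 in probability; (ii) sup_{theta in cl(Theta)} |Gamma_n(theta) - Gamma(theta)| -> 0 in probability; (iii) (1/n) * sup_{theta in cl(Theta)} |third-order derivative array of H_n(theta)| is bounded in probability. Then Integral_{hat_U_n intersect A_n} hat_Z_n(u) * ( pi(hat_theta_n + n^{-1/2} u) - pi(hat_theta_n) ) du -> 0 in probability as n -> infinity. -/
open MeasureTheory Filter Matrix

noncomputable section

/-- Convergence in probability of a sequence of real random variables to a constant. -/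
def TendstoInProb {Ω : Type*} [MeasurableSpace Ω] (P : Measure Ω)
    (X : ℕ → Ω → ℝ) (c : ℝ) : Prop :=
  ∀ ε > 0, Tendsto (fun n => P {ω | ε < |X n ω - c|}) atTop (nhds 0)

/-- Boundedness in probability (`O_p(1)`) of a sequence of real random variables. -/
def BoundedInProb {Ω : Type*} [MeasurableSpace Ω] (P : Measure Ω)
    (X : ℕ → Ω → ℝ) : Prop :=
  ∀ ε > 0, ∃ M > 0, Filter.limsup (fun n => P {ω | M < |X n ω|}) atTop ≤ ENNReal.ofReal ε

/-- The `i`-th standard basis vector of `R^q`. -/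
def stdBasis (q : ℕ) (i : Fin q) : EuclideanSpace ℝ (Fin q) := EuclideanSpace.single i 1

/-- The `(i,j)` entry of the Hessian of `f` at `θ`. -/
def hessEntry (q : ℕ) (f : EuclideanSpace ℝ (Fin q) → ℝ)
    (θ : EuclideanSpace ℝ (Fin q)) (i j : Fin q) : ℝ :=
  iteratedFDeriv ℝ 2 f θ ![stdBasis q i, stdBasis q j]

/-- Frobenius norm of a `q × q` array. -/
def frobNorm (q : ℕ) (A : Fin q → Fin q → ℝ) : ℝ :=
  Real.sqrt (∑ i, ∑ j, (A i j) ^ 2)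

/-- Frobenius norm of the array of third-order partial derivatives of `f` at `θ`. -/
def thirdFrob (q : ℕ) (f : EuclideanSpace ℝ (Fin q) → ℝ)
    (θ : EuclideanSpace ℝ (Fin q)) : ℝ :=
  Real.sqrt (∑ i, ∑ j, ∑ k,
    (iteratedFDeriv ℝ 3 f θ ![stdBasis q i, stdBasis q j, stdBasis q k]) ^ 2)



section AuxLemmas

variable {q : ℕ}

lemma my_update_zero {α : Type*} (x y a : α) : Function.update ![x, y] 0 a = ![a, y] := by
  ext i; fin_cases i <;> simp [Function.update]

lemma my_update_one {α : Type*} (x y b : α) : Function.update ![x, y] 1 b = ![x, b] := by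
  ext i; fin_cases i <;> simp [Function.update]

variable {q : ℕ}

lemma euclid_repr (u : EuclideanSpace ℝ (Fin q)) :
    ∑ i, u i • _root_.stdBasis q i = u := by
  ext j
  have : (∑ i, u i • _root_.stdBasis q i) j = ∑ i, u i * (_root_.stdBasis q i) j := by
    rw [WithLp.ofLp_sum, Finset.sum_apply]; rfl
  rw [this]
  simp [_root_.stdBasis, EuclideanSpace.single_apply, mul_ite]

lemma norm_sq_eq_sum (u : EuclideanSpace ℝ (Fin q)) : ‖u‖ ^ 2 = ∑ i, (u i) ^ 2 := by
  rw [EuclideanSpace.norm_eq, Real.sq_sqrt]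
  · simp [sq_abs]
  · positivity

abbrev ESp (q : ℕ) := EuclideanSpace ℝ (Fin q)

variable (P : ContinuousMultilinearMap ℝ (fun _ : Fin 2 => ESp q) ℝ)

lemma P_add_left (x x' y : ESp q) : P ![x + x', y] = P ![x, y] + P ![x', y] := by
  have h := P.map_update_add ![x, y] 0 x x'
  rwa [my_update_zero, my_update_zero, my_update_zero] at h

lemma P_smul_left (c : ℝ) (x y : ESp q) : P ![c • x, y] = c * P ![x, y] := by
  have h := P.map_update_smul ![x, y] 0 c x
  rwa [my_update_zero, my_update_zero, smul_eq_mul] at h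

lemma P_add_right (x y y' : ESp q) : P ![x, y + y'] = P ![x, y] + P ![x, y'] := by
  have h := P.map_update_add ![x, y] 1 y y'
  rwa [my_update_one, my_update_one, my_update_one] at h

lemma P_smul_right (c : ℝ) (x y : ESp q) : P ![x, c • y] = c * P ![x, y] := by
  have h := P.map_update_smul ![x, y] 1 c y
  rwa [my_update_one, my_update_one, smul_eq_mul] at h

lemma P_sum_left {ι : Type*} (s : Finset ι) (f : ι → ESp q) (y : ESp q) :
    P ![∑ i ∈ s, f i, y] = ∑ i ∈ s, P ![f i, y] := by
  classical
  induction s using Finset.cons_induction with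
  | empty =>
      simp only [Finset.sum_empty]
      exact P.map_coord_zero (m := ![0, y]) 0 rfl
  | cons a s ha ih => rw [Finset.sum_cons, P_add_left, ih, Finset.sum_cons]

lemma P_sum_right {ι : Type*} (s : Finset ι) (x : ESp q) (f : ι → ESp q) :
    P ![x, ∑ i ∈ s, f i] = ∑ i ∈ s, P ![x, f i] := by
  classical
  induction s using Finset.cons_induction with
  | empty =>
      simp only [Finset.sum_empty]
      exact P.map_coord_zero (m := ![x, 0]) 1 rfl
  | cons a s ha ih => rw [Finset.sum_cons, P_add_right, ih, Finset.sum_cons]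

lemma bilin_expand (u w : ESp q) :
    P ![u, w] = ∑ i, ∑ j, (u i * w j) * P ![_root_.stdBasis q i, _root_.stdBasis q j] := by
  conv_lhs => rw [← euclid_repr u, ← euclid_repr w]
  rw [P_sum_left]
  refine Finset.sum_congr rfl fun i _ => ?_
  rw [P_smul_left, P_sum_right, Finset.mul_sum]
  refine Finset.sum_congr rfl fun j _ => ?_
  rw [P_smul_right]
  ring


lemma abs_quad_le_frob (A : Fin q → Fin q → ℝ) (u : ESp q) :
    |∑ i, ∑ j, (u i * u j) * A i j| ≤ frobNorm q A * ‖u‖ ^ 2 := by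
  have h1 : |∑ i, ∑ j, (u i * u j) * A i j| ≤ ∑ i, ∑ j, |u i * u j| * |A i j| := by
    refine (Finset.abs_sum_le_sum_abs _ _).trans ?_
    refine Finset.sum_le_sum fun i _ => ?_
    refine (Finset.abs_sum_le_sum_abs _ _).trans ?_
    refine Finset.sum_le_sum fun j _ => ?_
    rw [abs_mul]
  refine h1.trans ?_
  have h2 : (∑ i, ∑ j, |u i * u j| * |A i j|) ^ 2 ≤
      (∑ i, ∑ j, |u i * u j| ^ 2) * (∑ i, ∑ j, |A i j| ^ 2) := by
    have hcs := Finset.sum_mul_sq_le_sq_mul_sq (Finset.univ : Finset (Fin q × Fin q))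
      (fun p => |u p.1 * u p.2|) (fun p => |A p.1 p.2|)
    rw [← Finset.sum_product' (f := fun i j => |u i * u j| * |A i j|),
        ← Finset.sum_product' (f := fun i j => |u i * u j| ^ 2),
        ← Finset.sum_product' (f := fun i j => |A i j| ^ 2)]
    exact hcs
  have hsum1 : (∑ i, ∑ j, |u i * u j| ^ 2) = (‖u‖ ^ 2) ^ 2 := by
    rw [norm_sq_eq_sum, sq (∑ i, (u i)^2), Finset.sum_mul_sum]
    refine Finset.sum_congr rfl fun i _ => Finset.sum_congr rfl fun j _ => ?_
    rw [sq_abs]; ring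
  have hsum2 : (∑ i, ∑ j, |A i j| ^ 2) = (frobNorm q A) ^ 2 := by
    rw [frobNorm, Real.sq_sqrt (by positivity)]
    simp [sq_abs]
  have hnn : (0:ℝ) ≤ ∑ i, ∑ j, |u i * u j| * |A i j| := by positivity
  have hfn : (0:ℝ) ≤ frobNorm q A := Real.sqrt_nonneg _
  have hb : (0:ℝ) ≤ frobNorm q A * ‖u‖ ^ 2 := mul_nonneg hfn (sq_nonneg _)
  have hsq : (∑ i, ∑ j, |u i * u j| * |A i j|) ^ 2 ≤ (frobNorm q A * ‖u‖ ^ 2) ^ 2 := by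
    rw [hsum1, hsum2] at h2
    calc (∑ i, ∑ j, |u i * u j| * |A i j|) ^ 2 ≤ (‖u‖ ^ 2) ^ 2 * frobNorm q A ^ 2 := h2
      _ = (frobNorm q A * ‖u‖ ^ 2) ^ 2 := by ring
  exact (pow_le_pow_iff_left₀ hnn hb (by norm_num)).1 hsq

lemma dot_eq_quad (M : Matrix (Fin q) (Fin q) ℝ) (z : Fin q → ℝ) :
    z ⬝ᵥ M.mulVec z = ∑ i, ∑ j, (z i * z j) * M i j := by
  simp only [dotProduct, Matrix.mulVec, dotProduct]
  refine Finset.sum_congr rfl fun i _ => ?_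
  rw [Finset.mul_sum]
  exact Finset.sum_congr rfl fun j _ => by ring

lemma posdef_quad_lower (hq : 1 ≤ q) (M : Matrix (Fin q) (Fin q) ℝ) (hM : M.PosDef) :
    ∃ lam > (0:ℝ), ∀ u : ESp q, lam * ‖u‖ ^ 2 ≤ ∑ i, ∑ j, (u i * u j) * M i j := by
  classical
  set Q : ESp q → ℝ := fun u => ∑ i, ∑ j, (u i * u j) * M i j with hQ
  have hQcont : Continuous Q := by
    refine continuous_finset_sum _ fun i _ => continuous_finset_sum _ fun j _ => ?_
    have hcoord : ∀ k : Fin q, Continuous fun v : ESp q => v k := fun k => by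
      exact (EuclideanSpace.proj k).continuous
    exact ((hcoord i).mul (hcoord j)).mul continuous_const
  have hQpos : ∀ u : ESp q, u ≠ 0 → 0 < Q u := by
    intro u hu
    have h := hM.dotProduct_mulVec_pos (x := fun i => u i) ?_
    · have h2 : (0:ℝ) < (fun i => u i) ⬝ᵥ M.mulVec (fun i => u i) := by simpa using h
      rw [dot_eq_quad] at h2
      exact h2
    · intro hzero
      exact hu (by ext i; exact congrFun hzero i)
  haveI : Nontrivial (ESp q) := by
    refine ⟨_root_.stdBasis q ⟨0, hq⟩, 0, fun h => ?_⟩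
    have := congrFun (congrArg (fun v : ESp q => (v : Fin q → ℝ)) h) ⟨0, hq⟩
    simp [_root_.stdBasis, EuclideanSpace.single_apply] at this
  have hsphne : (Metric.sphere (0 : ESp q) 1).Nonempty :=
    NormedSpace.sphere_nonempty.2 zero_le_one
  obtain ⟨w, hw, hwmin⟩ := (isCompact_sphere (0 : ESp q) 1).exists_isMinOn hsphne
    hQcont.continuousOn
  have hwnorm : ‖w‖ = 1 := by simpa using hw
  have hwne : w ≠ 0 := by intro h; rw [h] at hwnorm; simp at hwnorm
  refine ⟨Q w, hQpos w hwne, fun u => ?_⟩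
  rcases eq_or_ne u 0 with rfl | hu
  · have : Q 0 = 0 := by
      simp only [hQ]
      refine Finset.sum_eq_zero fun i _ => Finset.sum_eq_zero fun j _ => ?_
      have : (0 : ESp q) i = 0 := rfl
      rw [this]; ring
    rw [show (∑ i, ∑ j, ((0:ESp q) i * (0:ESp q) j) * M i j) = Q 0 from rfl, this]
    simp
  · have hnu : (0:ℝ) < ‖u‖ := norm_pos_iff.2 hu
    set w' : ESp q := ‖u‖⁻¹ • u with hw'
    have hw'mem : w' ∈ Metric.sphere (0 : ESp q) 1 := by
      simp [hw', norm_smul, abs_inv, abs_of_pos hnu, inv_mul_cancel₀ hnu.ne']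
    have hhomog : Q w' = ‖u‖⁻¹ ^ 2 * Q u := by
      simp only [hQ, Finset.mul_sum]
      refine Finset.sum_congr rfl fun i _ => Finset.sum_congr rfl fun j _ => ?_
      have hi : w' i = ‖u‖⁻¹ * u i := rfl
      have hj : w' j = ‖u‖⁻¹ * u j := rfl
      rw [hi, hj]; ring
    have hmin : Q w ≤ Q w' := hwmin hw'mem
    rw [hhomog] at hmin
    have hfinal : Q w * ‖u‖ ^ 2 ≤ Q u := by
      have h2 := mul_le_mul_of_nonneg_right hmin (sq_nonneg ‖u‖)
      calc Q w * ‖u‖ ^ 2 ≤ ‖u‖⁻¹ ^ 2 * Q u * ‖u‖ ^ 2 := h2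
        _ = Q u := by field_simp
    exact hfinal

lemma gauss_integrable (hq : 1 ≤ q) {κ : ℝ} (hκ : 0 < κ) :
    Integrable (fun u : ESp q => Real.exp (-κ * ‖u‖ ^ 2)) := by
  have h := (GaussianFourier.integrable_cexp_neg_mul_sq_norm_add
    (V := ESp q) (b := (κ : ℂ)) (by simpa using hκ) 0 (0 : ESp q)).norm
  have heq : ∀ u : ESp q,
      ‖Complex.exp (-(κ:ℂ) * (‖u‖:ℂ) ^ 2 + 0 * (inner ℝ (0 : ESp q) u : ℝ))‖
        = Real.exp (-κ * ‖u‖ ^ 2) := by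
    intro u
    rw [Complex.norm_exp]
    have hcast : -(κ:ℂ) * (‖u‖:ℂ) ^ 2 + 0 * ((inner ℝ (0 : ESp q) u : ℝ) : ℂ)
        = ((-κ * ‖u‖ ^ 2 : ℝ) : ℂ) := by push_cast; ring
    rw [hcast, Complex.ofReal_re]
  simpa only [heq] using h

lemma taylor_max_bound {f : ESp q → ℝ} {U Θ : Set (ESp q)} (hU : IsOpen U)
    (hΘconv : Convex ℝ Θ) (hcl : closure Θ ⊆ U) (hf : ContDiffOn ℝ 3 f U)
    {x v : ESp q} (hx : x ∈ closure Θ) (hxv : x + v ∈ closure Θ)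
    (hmax : ∀ θ ∈ closure Θ, f θ ≤ f x) {κ₂ : ℝ} (hκ₂ : 0 ≤ κ₂)
    (hsecond : ∀ t ∈ Set.Icc (0:ℝ) 1,
      iteratedFDeriv ℝ 2 f (x + t • v) ![v, v] ≤ -κ₂) :
    f (x + v) - f x ≤ -(κ₂ / 2) := by
  classical
  set c : ℝ → ESp q := fun t => x + t • v with hc
  have hconv' : Convex ℝ (closure Θ) := hΘconv.closure
  have hc_mem : ∀ t ∈ Set.Icc (0:ℝ) 1, c t ∈ closure Θ := by
    intro t ht
    have heq : (1 - t) • x + t • (x + v) = x + t • v := by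
      rw [smul_add, sub_smul, one_smul]; abel
    have := hconv' (a := 1 - t) (b := t) hx hxv (by linarith [ht.2]) ht.1 (by ring)
    rwa [heq] at this
  have hcU : ∀ t ∈ Set.Icc (0:ℝ) 1, c t ∈ U := fun t ht => hcl (hc_mem t ht)
  have hdiff1 : ∀ y ∈ U, HasFDerivAt f (fderiv ℝ f y) y := fun y hy =>
    ((hf.differentiableOn (by norm_num)).differentiableAt (hU.mem_nhds hy)).hasFDerivAt
  have hF2 : ContDiffOn ℝ 2 (fderiv ℝ f) U := hf.fderiv_of_isOpen hU (by norm_num)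
  have hdiff2 : ∀ y ∈ U, HasFDerivAt (fderiv ℝ f) (fderiv ℝ (fderiv ℝ f) y) y := fun y hy =>
    ((hF2.differentiableOn (by norm_num)).differentiableAt (hU.mem_nhds hy)).hasFDerivAt
  have hcderiv : ∀ t : ℝ, HasDerivAt c v t := by
    intro t
    have := ((hasDerivAt_id t).smul_const v).const_add x
    simpa [hc] using this
  have hg : ∀ t ∈ Set.Icc (0:ℝ) 1,
      HasDerivAt (fun s => f (c s)) (fderiv ℝ f (c t) v) t := fun t ht =>
    (hdiff1 _ (hcU t ht)).comp_hasDerivAt t (hcderiv t)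
  have hψ : ∀ t ∈ Set.Icc (0:ℝ) 1,
      HasDerivAt (fun s => fderiv ℝ f (c s) v)
        (iteratedFDeriv ℝ 2 f (c t) ![v, v]) t := by
    intro t ht
    have h1 : HasDerivAt (fun s => fderiv ℝ f (c s)) (fderiv ℝ (fderiv ℝ f) (c t) v) t :=
      (hdiff2 _ (hcU t ht)).comp_hasDerivAt t (hcderiv t)
    have h2 := ((ContinuousLinearMap.apply ℝ ℝ v).hasFDerivAt).comp_hasDerivAt t h1
    have h3 : iteratedFDeriv ℝ 2 f (c t) ![v, v] = fderiv ℝ (fderiv ℝ f) (c t) v v := by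
      rw [iteratedFDeriv_two_apply]
      simp
    rw [h3]
    exact h2
  have hc0 : c 0 = x := by simp [hc]
  have hc1 : c 1 = x + v := by simp [hc]
  have h01 : (0:ℝ) ∈ Set.Icc (0:ℝ) 1 := ⟨le_refl _, zero_le_one⟩
  have h11 : (1:ℝ) ∈ Set.Icc (0:ℝ) 1 := ⟨zero_le_one, le_refl _⟩
  -- first derivative at 0 is nonpositive
  have hg'0 : fderiv ℝ f x v ≤ 0 := by
    have h0 : HasDerivAt (fun s => f (c s)) (fderiv ℝ f x v) 0 := by
      have := hg 0 h01; rwa [hc0] at this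
    have hsub : HasDerivWithinAt (fun s => f (c s)) (fderiv ℝ f x v) (Set.Ioc (0:ℝ) 1) 0 :=
      h0.hasDerivWithinAt
    rw [hasDerivWithinAt_iff_tendsto_slope] at hsub
    have hIoc : Set.Ioc (0:ℝ) 1 \ {0} = Set.Ioc 0 1 :=
      Set.diff_singleton_eq_self (by simp)
    rw [hIoc] at hsub
    haveI hne : (nhdsWithin (0:ℝ) (Set.Ioc (0:ℝ) 1)).NeBot := by
      refine mem_closure_iff_nhdsWithin_neBot.mp ?_
      rw [closure_Ioc (by norm_num : (0:ℝ) ≠ 1)]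
      exact ⟨le_refl _, zero_le_one⟩
    refine le_of_tendsto hsub ?_
    filter_upwards [self_mem_nhdsWithin] with t ht
    have hmt : f (c t) ≤ f (c 0) := by
      rw [hc0]; exact hmax _ (hc_mem t ⟨le_of_lt ht.1, ht.2⟩)
    have : slope (fun s => f (c s)) 0 t = (f (c t) - f (c 0)) / (t - 0) := slope_def_field _ _ _
    rw [this]
    apply div_nonpos_of_nonpos_of_nonneg
    · linarith
    · linarith [ht.1]
  -- Step A : φ := ψ + κ₂ t is antitone on [0,1]
  set φ : ℝ → ℝ := fun t => fderiv ℝ f (c t) v + κ₂ * t with hφ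
  have hφhas : ∀ t ∈ Set.Icc (0:ℝ) 1,
      HasDerivAt φ (iteratedFDeriv ℝ 2 f (c t) ![v, v] + κ₂) t := by
    intro t ht
    have h2 : HasDerivAt (fun s : ℝ => κ₂ * s) κ₂ t := by
      simpa using (hasDerivAt_id t).const_mul κ₂
    exact (hψ t ht).add h2
  have hant1 : AntitoneOn φ (Set.Icc (0:ℝ) 1) := by
    apply antitoneOn_of_deriv_nonpos (convex_Icc (0:ℝ) 1)
    · exact fun t ht => (hφhas t ht).continuousAt.continuousWithinAt
    · rw [interior_Icc]
      exact fun t ht => ((hφhas t (Set.mem_Icc_of_Ioo ht)).differentiableAt).differentiableWithinAt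
    · rw [interior_Icc]
      intro t ht
      rw [(hφhas t (Set.mem_Icc_of_Ioo ht)).deriv]
      have := hsecond t (Set.mem_Icc_of_Ioo ht)
      linarith
  have hφle : ∀ t ∈ Set.Icc (0:ℝ) 1, φ t ≤ 0 := by
    intro t ht
    have := hant1 h01 ht ht.1
    have hφ0 : φ 0 = fderiv ℝ f x v := by simp [hφ, hc0]
    rw [hφ0] at this
    linarith
  -- Step B : h := f ∘ c + κ₂/2 t² is antitone on [0,1]
  set h : ℝ → ℝ := fun t => f (c t) + κ₂ / 2 * t ^ 2 with hh
  have hhhas : ∀ t ∈ Set.Icc (0:ℝ) 1, HasDerivAt h (φ t) t := by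
    intro t ht
    have h2 : HasDerivAt (fun s : ℝ => κ₂ / 2 * s ^ 2) (κ₂ * t) t := by
      have := (hasDerivAt_pow 2 t).const_mul (κ₂ / 2)
      exact this.congr_deriv (by push_cast; ring)
    have := (hg t ht).add h2
    exact this
  have hant2 : AntitoneOn h (Set.Icc (0:ℝ) 1) := by
    apply antitoneOn_of_deriv_nonpos (convex_Icc (0:ℝ) 1)
    · exact fun t ht => (hhhas t ht).continuousAt.continuousWithinAt
    · rw [interior_Icc]
      exact fun t ht => ((hhhas t (Set.mem_Icc_of_Ioo ht)).differentiableAt).differentiableWithinAt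
    · rw [interior_Icc]
      intro t ht
      rw [(hhhas t (Set.mem_Icc_of_Ioo ht)).deriv]
      exact hφle t (Set.mem_Icc_of_Ioo ht)
  have hfin := hant2 h01 h11 zero_le_one
  simp only [hh, hc0, hc1] at hfin
  -- f (x+v) + κ₂/2 ≤ f x + 0
  have : f (x + v) + κ₂ / 2 ≤ f x := by
    have h1 : (1:ℝ) ^ 2 = 1 := one_pow 2
    nlinarith [hfin]
  linarith

lemma le_biSup_closure {g : ESp q → ℝ} {Θ : Set (ESp q)} (hΘbdd : Bornology.IsBounded Θ)
    (hg : ContinuousOn g (closure Θ)) {θ₁ : ESp q} (hθ₁ : θ₁ ∈ closure Θ) :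
    g θ₁ ≤ ⨆ θ ∈ closure Θ, g θ := by
  have hK : IsCompact (closure Θ) := hΘbdd.isCompact_closure
  obtain ⟨M, hM⟩ := hK.exists_bound_of_continuousOn hg
  have hbdd : BddAbove (Set.range fun θ => ⨆ _ : θ ∈ closure Θ, g θ) := by
    refine ⟨max M 0, ?_⟩
    rintro _ ⟨θ, rfl⟩
    by_cases hθ : θ ∈ closure Θ
    · haveI : Nonempty (θ ∈ closure Θ) := ⟨hθ⟩
      have : (⨆ _ : θ ∈ closure Θ, g θ) = g θ := ciSup_const
      simp only [this]
      exact le_max_of_le_left ((le_abs_self _).trans (hM θ hθ))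
    · haveI : IsEmpty (θ ∈ closure Θ) := ⟨hθ⟩
      have : (⨆ _ : θ ∈ closure Θ, g θ) = 0 := Real.iSup_of_isEmpty _
      simp only [this]
      exact le_max_right _ _
  haveI : Nonempty (θ₁ ∈ closure Θ) := ⟨hθ₁⟩
  calc g θ₁ = ⨆ _ : θ₁ ∈ closure Θ, g θ₁ := (ciSup_const).symm
    _ ≤ ⨆ θ, ⨆ _ : θ ∈ closure Θ, g θ := le_ciSup hbdd θ₁

lemma frob_diff_contOn {f : ESp q → ℝ} {U : Set (ESp q)} (hU : IsOpen U)
    (hf : ContDiffOn ℝ 3 f U) (Γ : ESp q → Matrix (Fin q) (Fin q) ℝ)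
    (hΓ : Continuous Γ) (a : ℝ) :
    ContinuousOn (fun θ => frobNorm q (fun i j => a * hessEntry q f θ i j - Γ θ i j)) U := by
  have h1 := hf.continuousOn_iteratedFDerivWithin (m := 2) (by norm_num) hU.uniqueDiffOn
  have hiFD : ContinuousOn (iteratedFDeriv ℝ 2 f) U :=
    h1.congr fun x hx => (iteratedFDerivWithin_of_isOpen 2 hU hx).symm
  have hhess : ∀ i j, ContinuousOn (fun θ => hessEntry q f θ i j) U := by
    intro i j
    have heval : Continuous fun P : ContinuousMultilinearMap ℝ (fun _ : Fin 2 => ESp q) ℝ =>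
        P ![_root_.stdBasis q i, _root_.stdBasis q j] := continuous_eval_const _
    exact heval.comp_continuousOn hiFD
  refine Real.continuous_sqrt.comp_continuousOn ?_
  refine continuousOn_finset_sum _ fun i _ => continuousOn_finset_sum _ fun j _ => ?_
  exact ((continuousOn_const.mul (hhess i j)).sub
    (((continuous_apply j).comp ((continuous_apply i).comp hΓ)).continuousOn)).pow 2

end AuxLemmas

set_option maxHeartbeats 2000000 in
/-- Proposition 5.5: `∫_{Ûₙ ∩ Aₙ} Ẑₙ(u) (π(θ̂ₙ + n^{-1/2}u) - π(θ̂ₙ)) du → 0` in probability. -/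
theorem stmt1
    {Ω : Type*} [MeasurableSpace Ω] (P : Measure Ω) [IsProbabilityMeasure P]
    (q : ℕ) (hq : 1 ≤ q)
    (Θ : Set (EuclideanSpace ℝ (Fin q)))
    (hΘne : Θ.Nonempty) (hΘbdd : Bornology.IsBounded Θ) (hΘopen : IsOpen Θ)
    (hΘconv : Convex ℝ Θ)
    (H : ℕ → Ω → EuclideanSpace ℝ (Fin q) → ℝ)
    (hHmeas : ∀ n, Measurable (fun p : Ω × EuclideanSpace ℝ (Fin q) => H n p.1 p.2))
    (hHsmooth : ∀ n ω, ∃ U : Set (EuclideanSpace ℝ (Fin q)),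
      IsOpen U ∧ closure Θ ⊆ U ∧ ContDiffOn ℝ 3 (H n ω) U)
    (θhat : ℕ → Ω → EuclideanSpace ℝ (Fin q))
    (hθhatmeas : ∀ n, Measurable (θhat n))
    (hθhatmem : ∀ n ω, θhat n ω ∈ closure Θ)
    (hθhatmax : ∀ n ω, ∀ θ ∈ closure Θ, H n ω θ ≤ H n ω (θhat n ω))
    (θ0 : EuclideanSpace ℝ (Fin q)) (hθ0 : θ0 ∈ Θ)
    (Γ : EuclideanSpace ℝ (Fin q) → Matrix (Fin q) (Fin q) ℝ)
    (hΓcont : Continuous Γ) (hΓsymm : ∀ θ, (Γ θ).IsSymm)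
    (hΓ0 : (Γ θ0).PosDef)
    (pri : EuclideanSpace ℝ (Fin q) → ℝ)
    (hpricont : Continuous pri) (hpribdd : ∃ C, ∀ θ, pri θ ≤ C)
    (hprinonneg : ∀ θ, 0 ≤ pri θ)
    -- (i) θ̂ₙ → θ₀ in probability
    (h1 : ∀ ε > 0, Tendsto (fun n => P {ω | ε < ‖θhat n ω - θ0‖}) atTop (nhds 0))
    -- (ii) sup_{θ ∈ cl Θ} |Γₙ(θ) - Γ(θ)| → 0 in probability
    (h2 : ∀ ε > 0, Tendsto (fun n : ℕ =>
      P {ω | ε < ⨆ θ ∈ closure Θ, frobNorm q (fun i j =>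
        (-(1 / (n : ℝ)) * hessEntry q (H n ω) θ i j) - Γ θ i j)})
      atTop (nhds 0))
    -- (iii) (1/n) sup_{θ ∈ cl Θ} |∂³ Hₙ(θ)| is bounded in probability
    (h3 : BoundedInProb P (fun n ω => (1 / (n : ℝ)) * ⨆ θ ∈ closure Θ, thirdFrob q (H n ω) θ)) :
    TendstoInProb P (fun n ω =>
      ∫ u in {u : EuclideanSpace ℝ (Fin q) |
            θhat n ω + ((n : ℝ) ^ (-(1 : ℝ) / 2)) • u ∈ Θ} ∩
          {u : EuclideanSpace ℝ (Fin q) | ‖u‖ ≤ (n : ℝ) ^ ((3 : ℝ) / 8)},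
        Real.exp (H n ω (θhat n ω + ((n : ℝ) ^ (-(1 : ℝ) / 2)) • u) - H n ω (θhat n ω)) *
          (pri (θhat n ω + ((n : ℝ) ^ (-(1 : ℝ) / 2)) • u) - pri (θhat n ω))) 0 := by
  classical
  intro ε hε
  -- positive-definiteness constant
  obtain ⟨lam, hlam, hquad⟩ := posdef_quad_lower hq (Γ θ0) hΓ0
  -- radius r of Γ-continuity
  have hΓfrobcont : Continuous (fun θ : ESp q => frobNorm q (fun i j => Γ θ i j - Γ θ0 i j)) := by
    refine Real.continuous_sqrt.comp ?_
    refine continuous_finset_sum _ fun i _ => continuous_finset_sum _ fun j _ => ?_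
    exact (((continuous_apply j).comp ((continuous_apply i).comp hΓcont)).sub
      continuous_const).pow 2
  obtain ⟨δ₀, hδ₀pos, hδ₀⟩ :=
    Metric.continuousAt_iff.mp hΓfrobcont.continuousAt (lam / 8) (by positivity)
  set r : ℝ := δ₀ / 2 with hrdef
  have hrpos : 0 < r := by positivity
  have hr : ∀ θ : ESp q, dist θ θ0 ≤ r →
      frobNorm q (fun i j => Γ θ i j - Γ θ0 i j) ≤ lam / 8 := by
    intro θ hθ
    have h := hδ₀ (show dist θ θ0 < δ₀ by rw [hrdef] at hθ; linarith)
    have hF0 : frobNorm q (fun i j => Γ θ0 i j - Γ θ0 i j) = 0 := by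
      simp [frobNorm]
    rw [Real.dist_eq, hF0, sub_zero] at h
    exact ((le_abs_self _).trans h.le)
  -- prior bounds
  obtain ⟨C, hC⟩ := hpribdd
  set C' : ℝ := max C 1 with hC'def
  have hC'pos : (0:ℝ) < C' := lt_of_lt_of_le one_pos (le_max_right _ _)
  have hC'bd : ∀ θ, pri θ ≤ C' := fun θ => (hC θ).trans (le_max_left _ _)
  have hpridiff : ∀ a b : ESp q, |pri a - pri b| ≤ C' := by
    intro a b
    rw [abs_sub_le_iff]
    exact ⟨by linarith [hprinonneg b, hC'bd a], by linarith [hprinonneg a, hC'bd b]⟩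
  -- Gaussian constants
  set κ : ℝ := 3 / 8 * lam with hκdef
  have hκpos : 0 < κ := by rw [hκdef]; linarith
  have hg1 : Integrable (fun u : ESp q => Real.exp (-κ * ‖u‖ ^ 2)) := gauss_integrable hq hκpos
  have hg2 : Integrable (fun u : ESp q => Real.exp (-(κ / 2) * ‖u‖ ^ 2)) :=
    gauss_integrable hq (by linarith)
  set I1 : ℝ := ∫ u : ESp q, Real.exp (-κ * ‖u‖ ^ 2) with hI1
  set I2 : ℝ := ∫ u : ESp q, Real.exp (-(κ / 2) * ‖u‖ ^ 2) with hI2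
  have hI1nn : 0 ≤ I1 := integral_nonneg fun u => (Real.exp_pos _).le
  have hI2nn : 0 ≤ I2 := integral_nonneg fun u => (Real.exp_pos _).le
  -- choice of R
  have htail : Tendsto (fun R : ℝ => C' * Real.exp (-(κ / 2) * R ^ 2) * I2) atTop (nhds 0) := by
    have hsq : Tendsto (fun R : ℝ => R ^ 2) atTop atTop := tendsto_pow_atTop two_ne_zero
    have hbot : Tendsto (fun R : ℝ => -(κ / 2) * R ^ 2) atTop atBot :=
      (tendsto_const_mul_atBot_of_neg (by linarith)).mpr hsq
    have hexp : Tendsto (fun R : ℝ => Real.exp (-(κ / 2) * R ^ 2)) atTop (nhds 0) :=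
      Real.tendsto_exp_atBot.comp hbot
    have := (hexp.const_mul C').mul_const I2
    simpa using this
  obtain ⟨R, hR0, hRtail⟩ : ∃ R : ℝ, 0 ≤ R ∧ C' * Real.exp (-(κ / 2) * R ^ 2) * I2 ≤ ε / 2 := by
    have hlt := htail.eventually_lt_const (by linarith : (0:ℝ) < ε / 2)
    obtain ⟨R, hR1, hR2⟩ := ((eventually_ge_atTop (0:ℝ)).and hlt).exists
    exact ⟨R, hR1, hR2.le⟩
  -- choice of ε'
  set ε' : ℝ := ε / (2 * (I1 + 1)) with hε'def
  have hε'pos : 0 < ε' := by rw [hε'def]; positivity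
  have hε'I1 : ε' * I1 ≤ ε / 2 := by
    have h1' : ε' * I1 ≤ ε' * (I1 + 1) := by nlinarith
    have h2' : ε' * (I1 + 1) = ε / 2 := by
      rw [hε'def]; field_simp
    linarith
  -- modulus of continuity of pri on a compact ball
  have huc := (isCompact_closedBall θ0 (r + 1)).uniformContinuousOn_of_continuous
    hpricont.continuousOn
  rw [Metric.uniformContinuousOn_iff_le] at huc
  obtain ⟨ρ, hρpos, hρ⟩ := huc ε' hε'pos
  -- eventual deterministic conditions
  have hd8 : Tendsto (fun n : ℕ => ((n:ℝ)) ^ (-(1:ℝ)/8)) atTop (nhds 0) := by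
    have := (tendsto_rpow_neg_atTop (by norm_num : (0:ℝ) < 1/8)).comp
      (tendsto_natCast_atTop_atTop (R := ℝ))
    simpa [neg_div, Function.comp_def] using this
  have hd2 : Tendsto (fun n : ℕ => ((n:ℝ)) ^ (-(1:ℝ)/2)) atTop (nhds 0) := by
    have := (tendsto_rpow_neg_atTop (by norm_num : (0:ℝ) < 1/2)).comp
      (tendsto_natCast_atTop_atTop (R := ℝ))
    simpa [neg_div, Function.comp_def] using this
  have hev1 : ∀ᶠ n : ℕ in atTop, (n:ℝ) ^ (-(1:ℝ)/8) ≤ r/2 :=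
    (hd8.eventually_lt_const (by positivity : (0:ℝ) < r/2)).mono fun n h => h.le
  have hev2 : ∀ᶠ n : ℕ in atTop, (n:ℝ) ^ (-(1:ℝ)/2) * R ≤ ρ := by
    have := hd2.mul_const R
    rw [zero_mul] at this
    exact (this.eventually_lt_const hρpos).mono fun n h => h.le
  have hev3 : ∀ᶠ n : ℕ in atTop, 1 ≤ n := eventually_ge_atTop 1
  -- the key deterministic estimate
  have key : ∀ n : ℕ, 1 ≤ n → (n:ℝ) ^ (-(1:ℝ)/8) ≤ r/2 → (n:ℝ) ^ (-(1:ℝ)/2) * R ≤ ρ →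
      ∀ ω : Ω, ‖θhat n ω - θ0‖ ≤ r/2 →
      (⨆ θ ∈ closure Θ, frobNorm q (fun i j =>
        (-(1 / (n : ℝ)) * hessEntry q (H n ω) θ i j) - Γ θ i j)) ≤ lam/8 →
      |∫ u in {u : EuclideanSpace ℝ (Fin q) |
            θhat n ω + ((n : ℝ) ^ (-(1 : ℝ) / 2)) • u ∈ Θ} ∩
          {u : EuclideanSpace ℝ (Fin q) | ‖u‖ ≤ (n : ℝ) ^ ((3 : ℝ) / 8)},
        Real.exp (H n ω (θhat n ω + ((n : ℝ) ^ (-(1 : ℝ) / 2)) • u) - H n ω (θhat n ω)) *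
          (pri (θhat n ω + ((n : ℝ) ^ (-(1 : ℝ) / 2)) • u) - pri (θhat n ω))| ≤ ε := by
    intro n hn hd hδR ω hθx hSsup
    obtain ⟨U, hUopen, hUsub, hcd⟩ := hHsmooth n ω
    have hnpos : (0:ℝ) < (n:ℝ) := by exact_mod_cast Nat.lt_of_lt_of_le Nat.zero_lt_one hn
    set δ : ℝ := (n:ℝ) ^ (-(1:ℝ)/2) with hδdef
    have hδpos : 0 < δ := Real.rpow_pos_of_pos hnpos _
    have hδsq : δ * δ = (n:ℝ)⁻¹ := by
      rw [hδdef, ← Real.rpow_add hnpos,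
        show (-(1:ℝ)/2 + -(1:ℝ)/2) = -1 by norm_num, Real.rpow_neg_one]
    have hdsmall : δ * (n:ℝ) ^ ((3:ℝ)/8) ≤ r/2 := by
      rw [hδdef, ← Real.rpow_add hnpos, show (-(1:ℝ)/2 + (3:ℝ)/8) = -(1:ℝ)/8 by norm_num]
      exact hd
    set x : EuclideanSpace ℝ (Fin q) := θhat n ω with hxdef
    have hxcl : x ∈ closure Θ := hθhatmem n ω
    have hmax : ∀ θ ∈ closure Θ, H n ω θ ≤ H n ω x := hθhatmax n ω
    set S : Set (EuclideanSpace ℝ (Fin q)) :=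
      {u : EuclideanSpace ℝ (Fin q) | x + δ • u ∈ Θ} ∩
        {u : EuclideanSpace ℝ (Fin q) | ‖u‖ ≤ (n : ℝ) ^ ((3 : ℝ) / 8)} with hSdef
    have hfrob_ptwise : ∀ θ₁ ∈ closure Θ,
        frobNorm q (fun i j => (-(1/(n:ℝ)) * hessEntry q (H n ω) θ₁ i j) - Γ θ₁ i j)
          ≤ lam/8 := by
      intro θ₁ hθ₁
      refine le_trans (le_biSup_closure
        (g := fun θ => frobNorm q (fun i j =>
          (-(1/(n:ℝ)) * hessEntry q (H n ω) θ i j) - Γ θ i j)) hΘbdd ?_ hθ₁) hSsup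
      exact (frob_diff_contOn hUopen hcd Γ hΓcont (-(1/(n:ℝ)))).mono hUsub
    set G : EuclideanSpace ℝ (Fin q) → ℝ := fun u => ε' * Real.exp (-κ * ‖u‖ ^ 2) +
        Set.indicator {u : EuclideanSpace ℝ (Fin q) | R < ‖u‖}
          (fun u => C' * Real.exp (-κ * ‖u‖ ^ 2)) u with hGdef
    have hpoint : ∀ u ∈ S,
        |Real.exp (H n ω (x + δ • u) - H n ω x) * (pri (x + δ • u) - pri x)| ≤ G u := by
      rintro u ⟨hu1, hu2⟩
      have hu1' : x + δ • u ∈ Θ := hu1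
      have hu2' : ‖u‖ ≤ (n : ℝ) ^ ((3 : ℝ) / 8) := hu2
      set v : EuclideanSpace ℝ (Fin q) := δ • u with hvdef
      have hvnorm : ‖v‖ = δ * ‖u‖ := by
        rw [hvdef, norm_smul, Real.norm_eq_abs, abs_of_pos hδpos]
      have hvsmall : ‖v‖ ≤ r/2 := by
        rw [hvnorm]
        exact le_trans (mul_le_mul_of_nonneg_left hu2' hδpos.le) hdsmall
      have hxvcl : x + v ∈ closure Θ := subset_closure hu1'
      -- second-derivative bound along the segment
      have hsecond : ∀ t ∈ Set.Icc (0:ℝ) 1,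
          iteratedFDeriv ℝ 2 (H n ω) (x + t • v) ![v, v] ≤ -(3/4 * lam * ‖u‖ ^ 2) := by
        intro t ht
        set y : EuclideanSpace ℝ (Fin q) := x + t • v with hydef
        have hycl : y ∈ closure Θ := by
          have heq : (1 - t) • x + t • (x + v) = x + t • v := by
            rw [smul_add, sub_smul, one_smul]; abel
          have := (hΘconv.closure) (a := 1 - t) (b := t) hxcl hxvcl
            (by linarith [ht.2]) ht.1 (by ring)
          rw [heq] at this; exact this
        have hydist : dist y θ0 ≤ r := by
          rw [dist_eq_norm]
          have hy2 : y - θ0 = (x - θ0) + t • v := by rw [hydef]; abel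
          rw [hy2]
          refine le_trans (norm_add_le _ _) ?_
          have ht' : ‖t • v‖ ≤ ‖v‖ := by
            rw [norm_smul, Real.norm_eq_abs, abs_of_nonneg ht.1]
            exact mul_le_of_le_one_left (norm_nonneg v) ht.2
          have := hvsmall
          have := hθx
          have hxt : ‖x - θ0‖ ≤ r/2 := hθx
          linarith [ht'.trans hvsmall]
        have hQ0 := hquad u
        have hE1 : |∑ i, ∑ j, (u i * u j) *
            ((-(1/(n:ℝ)) * hessEntry q (H n ω) y i j) - Γ y i j)| ≤ lam/8 * ‖u‖ ^ 2 := by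
          refine le_trans (abs_quad_le_frob _ u) ?_
          exact mul_le_mul_of_nonneg_right (hfrob_ptwise y hycl) (sq_nonneg _)
        have hE2 : |∑ i, ∑ j, (u i * u j) * (Γ y i j - Γ θ0 i j)| ≤ lam/8 * ‖u‖ ^ 2 := by
          refine le_trans (abs_quad_le_frob _ u) ?_
          exact mul_le_mul_of_nonneg_right (hr y hydist) (sq_nonneg _)
        have hsplit : ∑ i, ∑ j, (u i * u j) * (-(1/(n:ℝ)) * hessEntry q (H n ω) y i j)
            = (∑ i, ∑ j, (u i * u j) *
                ((-(1/(n:ℝ)) * hessEntry q (H n ω) y i j) - Γ y i j))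
              + ((∑ i, ∑ j, (u i * u j) * (Γ y i j - Γ θ0 i j))
              + (∑ i, ∑ j, (u i * u j) * Γ θ0 i j)) := by
          rw [← Finset.sum_add_distrib, ← Finset.sum_add_distrib]
          refine Finset.sum_congr rfl fun i _ => ?_
          rw [← Finset.sum_add_distrib, ← Finset.sum_add_distrib]
          refine Finset.sum_congr rfl fun j _ => ?_
          ring
        have hlow : 3/4 * lam * ‖u‖ ^ 2 ≤
            ∑ i, ∑ j, (u i * u j) * (-(1/(n:ℝ)) * hessEntry q (H n ω) y i j) := by
          rw [hsplit]
          linarith [hQ0, (abs_le.mp hE1).1, (abs_le.mp hE2).1]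
        have hbil : iteratedFDeriv ℝ 2 (H n ω) y ![u, u]
            = ∑ i, ∑ j, (u i * u j) *
                iteratedFDeriv ℝ 2 (H n ω) y ![_root_.stdBasis q i, _root_.stdBasis q j] :=
          bilin_expand _ u u
        have hsum_eq : ∑ i, ∑ j, (u i * u j) * (-(1/(n:ℝ)) * hessEntry q (H n ω) y i j)
            = -(1/(n:ℝ)) * iteratedFDeriv ℝ 2 (H n ω) y ![u, u] := by
          rw [hbil, Finset.mul_sum]
          refine Finset.sum_congr rfl fun i _ => ?_
          rw [Finset.mul_sum]
          refine Finset.sum_congr rfl fun j _ => ?_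
          show (u i * u j) * (-(1/(n:ℝ)) * hessEntry q (H n ω) y i j) = _
          rw [hessEntry]
          ring
        have h1n : (1/(n:ℝ)) * (n:ℝ) = 1 := by field_simp
        have hiFD_u : iteratedFDeriv ℝ 2 (H n ω) y ![u, u]
            ≤ -(n:ℝ) * (3/4 * lam * ‖u‖ ^ 2) := by
          rw [hsum_eq] at hlow
          have h' := mul_le_mul_of_nonneg_left hlow hnpos.le
          have h'' : (n:ℝ) * (-(1/(n:ℝ)) * iteratedFDeriv ℝ 2 (H n ω) y ![u, u])
              = -(iteratedFDeriv ℝ 2 (H n ω) y ![u, u]) := by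
            field_simp
          rw [h''] at h'
          linarith
        have hvv : iteratedFDeriv ℝ 2 (H n ω) y ![v, v]
            = δ * (δ * iteratedFDeriv ℝ 2 (H n ω) y ![u, u]) := by
          rw [hvdef, P_smul_left, P_smul_right]
        rw [hvv]
        have hstep : δ * (δ * iteratedFDeriv ℝ 2 (H n ω) y ![u, u])
            ≤ δ * (δ * (-(n:ℝ) * (3/4 * lam * ‖u‖ ^ 2))) := by
          refine mul_le_mul_of_nonneg_left ?_ hδpos.le
          exact mul_le_mul_of_nonneg_left hiFD_u hδpos.le
        refine hstep.trans ?_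
        have : δ * (δ * (-(n:ℝ) * (3/4 * lam * ‖u‖ ^ 2)))
            = (δ * δ) * (-(n:ℝ) * (3/4 * lam * ‖u‖ ^ 2)) := by ring
        rw [this, hδsq]
        have hinv : (n:ℝ)⁻¹ * (-(n:ℝ) * (3/4 * lam * ‖u‖ ^ 2))
            = -(3/4 * lam * ‖u‖ ^ 2) := by
          field_simp
        rw [hinv]
      have htay := taylor_max_bound hUopen hΘconv hUsub hcd hxcl hxvcl hmax
        (by positivity : (0:ℝ) ≤ 3/4 * lam * ‖u‖ ^ 2) hsecond
      have hexp : Real.exp (H n ω (x + δ • u) - H n ω x) ≤ Real.exp (-κ * ‖u‖ ^ 2) := by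
        apply Real.exp_le_exp.mpr
        have hκeq : -κ * ‖u‖ ^ 2 = -(3/4 * lam * ‖u‖ ^ 2 / 2) := by rw [hκdef]; ring
        rw [hκeq]
        exact htay
      have hexp_pos := Real.exp_pos (H n ω (x + δ • u) - H n ω x)
      have habs : |Real.exp (H n ω (x + δ • u) - H n ω x) * (pri (x + δ • u) - pri x)|
          = Real.exp (H n ω (x + δ • u) - H n ω x) * |pri (x + δ • u) - pri x| := by
        rw [abs_mul, abs_of_pos hexp_pos]
      have hxK : x ∈ Metric.closedBall θ0 (r + 1) := by
        rw [Metric.mem_closedBall, dist_eq_norm]; linarith [hθx]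
      have hxvK : x + v ∈ Metric.closedBall θ0 (r + 1) := by
        rw [Metric.mem_closedBall, dist_eq_norm]
        have hxv2 : x + v - θ0 = (x - θ0) + v := by abel
        rw [hxv2]
        refine le_trans (norm_add_le _ _) ?_
        linarith [hθx, hvsmall]
      rw [habs]
      by_cases hcase : ‖u‖ ≤ R
      · have hdist : dist (x + v) x ≤ ρ := by
          rw [dist_eq_norm]
          have hxv3 : x + v - x = v := by abel
          rw [hxv3, hvnorm]
          exact le_trans (mul_le_mul_of_nonneg_left hcase hδpos.le) hδR
        have hprismall : |pri (x + v) - pri x| ≤ ε' := by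
          have := hρ (x + v) hxvK x hxK hdist
          rwa [Real.dist_eq] at this
        have hmul : Real.exp (H n ω (x + δ • u) - H n ω x) * |pri (x + δ • u) - pri x|
            ≤ Real.exp (-κ * ‖u‖ ^ 2) * ε' :=
          mul_le_mul hexp hprismall (abs_nonneg _) (Real.exp_pos _).le
        refine hmul.trans ?_
        have hGu : G u = ε' * Real.exp (-κ * ‖u‖ ^ 2) +
            Set.indicator {u : EuclideanSpace ℝ (Fin q) | R < ‖u‖}
              (fun u => C' * Real.exp (-κ * ‖u‖ ^ 2)) u := rfl
        rw [hGu]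
        have hind : (0:ℝ) ≤ Set.indicator {u : EuclideanSpace ℝ (Fin q) | R < ‖u‖}
            (fun u => C' * Real.exp (-κ * ‖u‖ ^ 2)) u :=
          Set.indicator_nonneg (fun a _ => by positivity) u
        have hco : Real.exp (-κ * ‖u‖ ^ 2) * ε' = ε' * Real.exp (-κ * ‖u‖ ^ 2) := by ring
        rw [hco]
        exact le_add_of_nonneg_right hind
      · push_neg at hcase
        have hmul : Real.exp (H n ω (x + δ • u) - H n ω x) * |pri (x + δ • u) - pri x|
            ≤ Real.exp (-κ * ‖u‖ ^ 2) * C' :=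
          mul_le_mul hexp (hpridiff _ _) (abs_nonneg _) (Real.exp_pos _).le
        refine hmul.trans ?_
        have hmem : u ∈ {u : EuclideanSpace ℝ (Fin q) | R < ‖u‖} := hcase
        have hGu : G u = ε' * Real.exp (-κ * ‖u‖ ^ 2) +
            Set.indicator {u : EuclideanSpace ℝ (Fin q) | R < ‖u‖}
              (fun u => C' * Real.exp (-κ * ‖u‖ ^ 2)) u := rfl
        rw [hGu, Set.indicator_of_mem hmem]
        have hnn : (0:ℝ) ≤ ε' * Real.exp (-κ * ‖u‖ ^ 2) := by positivity
        have hco : Real.exp (-κ * ‖u‖ ^ 2) * C' = C' * Real.exp (-κ * ‖u‖ ^ 2) := by ring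
        rw [hco]
        exact le_add_of_nonneg_left hnn
    -- measurability and integrability
    have hSmeas : MeasurableSet S := by
      rw [hSdef]
      apply MeasurableSet.inter
      · have hct : Continuous fun u : EuclideanSpace ℝ (Fin q) => x + δ • u :=
          continuous_const.add (continuous_id.const_smul δ)
        exact (hΘopen.preimage hct).measurableSet
      · exact (isClosed_le continuous_norm continuous_const).measurableSet
    have hindmeas : MeasurableSet {u : EuclideanSpace ℝ (Fin q) | R < ‖u‖} :=
      (isOpen_lt continuous_const continuous_norm).measurableSet
    have hindint : Integrable (Set.indicator {u : EuclideanSpace ℝ (Fin q) | R < ‖u‖}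
        (fun u => C' * Real.exp (-κ * ‖u‖ ^ 2))) :=
      (hg1.const_mul C').indicator hindmeas
    have hGint : Integrable G := by
      rw [hGdef]
      exact (hg1.const_mul ε').add hindint
    have hGnonneg : ∀ u, 0 ≤ G u := fun u =>
      add_nonneg (by positivity)
        (Set.indicator_nonneg (fun a _ => by positivity) u)
    -- the integral chain
    have hint1 : |∫ u in S,
        Real.exp (H n ω (x + δ • u) - H n ω x) * (pri (x + δ • u) - pri x)|
        ≤ ∫ u in S, |Real.exp (H n ω (x + δ • u) - H n ω x) * (pri (x + δ • u) - pri x)| := by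
      have hni := norm_integral_le_integral_norm (μ := volume.restrict S)
        (f := fun u => Real.exp (H n ω (x + δ • u) - H n ω x) * (pri (x + δ • u) - pri x))
      simp only [Real.norm_eq_abs] at hni
      exact hni
    have hint2 : (∫ u in S,
        |Real.exp (H n ω (x + δ • u) - H n ω x) * (pri (x + δ • u) - pri x)|)
        ≤ ∫ u in S, G u := by
      refine integral_mono_of_nonneg ?_ hGint.restrict ?_
      · exact Filter.Eventually.of_forall fun u => abs_nonneg _
      · exact (ae_restrict_mem hSmeas).mono fun u hu => hpoint u hu
    have hint3 : (∫ u in S, G u) ≤ ∫ u, G u :=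
      setIntegral_le_integral hGint (Filter.Eventually.of_forall hGnonneg)
    have hint4 : (∫ u, G u) ≤ ε / 2 + ε / 2 := by
      have hGsplit : (∫ u, G u) = ε' * I1
          + ∫ u, Set.indicator {u : EuclideanSpace ℝ (Fin q) | R < ‖u‖}
              (fun u => C' * Real.exp (-κ * ‖u‖ ^ 2)) u := by
        rw [hGdef]
        rw [integral_add (hg1.const_mul ε') hindint, integral_const_mul]
      have hptw : ∀ u : EuclideanSpace ℝ (Fin q),
          Set.indicator {u : EuclideanSpace ℝ (Fin q) | R < ‖u‖}
            (fun u => C' * Real.exp (-κ * ‖u‖ ^ 2)) u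
          ≤ C' * Real.exp (-(κ/2) * R ^ 2) * Real.exp (-(κ/2) * ‖u‖ ^ 2) := by
        intro u
        by_cases hm : u ∈ {u : EuclideanSpace ℝ (Fin q) | R < ‖u‖}
        · rw [Set.indicator_of_mem hm]
          have hRu : R < ‖u‖ := hm
          have h1 : R ^ 2 ≤ ‖u‖ ^ 2 := by nlinarith [norm_nonneg u]
          have hsplit2 : -κ * ‖u‖ ^ 2 = (-(κ/2) * ‖u‖ ^ 2) + (-(κ/2) * ‖u‖ ^ 2) := by ring
          rw [hsplit2, Real.exp_add]
          have hmono : Real.exp (-(κ/2) * ‖u‖ ^ 2) ≤ Real.exp (-(κ/2) * R ^ 2) :=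
            Real.exp_le_exp.mpr (by nlinarith)
          have h2 : Real.exp (-(κ/2) * ‖u‖ ^ 2) * Real.exp (-(κ/2) * ‖u‖ ^ 2)
              ≤ Real.exp (-(κ/2) * R ^ 2) * Real.exp (-(κ/2) * ‖u‖ ^ 2) :=
            mul_le_mul_of_nonneg_right hmono (Real.exp_pos _).le
          calc C' * (Real.exp (-(κ/2) * ‖u‖ ^ 2) * Real.exp (-(κ/2) * ‖u‖ ^ 2))
              ≤ C' * (Real.exp (-(κ/2) * R ^ 2) * Real.exp (-(κ/2) * ‖u‖ ^ 2)) :=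
                mul_le_mul_of_nonneg_left h2 hC'pos.le
            _ = C' * Real.exp (-(κ/2) * R ^ 2) * Real.exp (-(κ/2) * ‖u‖ ^ 2) := by ring
        · rw [Set.indicator_of_notMem hm]
          positivity
      have hindle : (∫ u, Set.indicator {u : EuclideanSpace ℝ (Fin q) | R < ‖u‖}
            (fun u => C' * Real.exp (-κ * ‖u‖ ^ 2)) u)
          ≤ C' * Real.exp (-(κ/2) * R ^ 2) * I2 := by
        have := integral_mono hindint
          (hg2.const_mul (C' * Real.exp (-(κ/2) * R ^ 2))) hptw
        rwa [integral_const_mul] at this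
      rw [hGsplit]
      have := hRtail
      linarith [hε'I1, hindle, hRtail]
    have hfinal := le_trans hint1 (le_trans hint2 (le_trans hint3 hint4))
    linarith [hfinal]
  -- assembly
  have hA := h1 (r/2) (by positivity)
  have hB := h2 (lam/8) (by positivity)
  have hAB : Tendsto (fun n : ℕ => P {ω | r/2 < ‖θhat n ω - θ0‖}
      + P {ω | lam/8 < ⨆ θ ∈ closure Θ, frobNorm q (fun i j =>
          (-(1 / (n : ℝ)) * hessEntry q (H n ω) θ i j) - Γ θ i j)}) atTop (nhds 0) := by
    have := hA.add hB
    simpa using this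
  refine tendsto_of_tendsto_of_tendsto_of_le_of_le' tendsto_const_nhds hAB
    (Filter.Eventually.of_forall fun n => zero_le) ?_
  filter_upwards [hev1, hev2, hev3] with n hc1 hc2 hc3
  refine le_trans (measure_mono ?_) (measure_union_le _ _)
  intro ω hω
  simp only [Set.mem_setOf_eq, sub_zero] at hω
  by_contra hcon
  simp only [Set.mem_union, Set.mem_setOf_eq, not_or, not_lt] at hcon
  obtain ⟨hA', hB'⟩ := hcon
  exact absurd hω (not_lt.mpr (key n hc3 hc1 hc2 ω hA' hB'))




end
end

section
/- Let n >= 1 be an integer, lambda_0 > 0, and hat_theta in Theta with grad H(hat_theta) = 0. Let A be a real symmetric q x q matrix with v^T A v >= 4 lambda_0 |v|^2 for all v in R^q, and assume | -(1/n) Hess H(hat_theta) - A | <= lambda_0 (Frobenius norm) and n^{-1/8} * (1/n) * S <= 3 lambda_0. Then for every u in R^q with hat_theta + n^{-1/2} u in Theta and |u| <= n^{3/8}, it holds that H(hat_theta + n^{-1/2} u) - H(hat_theta) <= -lambda_0 |u|^2. -/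
open MeasureTheory Filter Matrix

noncomputable section

abbrev E (q : ℕ) := EuclideanSpace ℝ (Fin q)

lemma my_cs {ι : Type*} [Fintype ι] (f g : ι → ℝ) :
    |∑ x, f x * g x| ≤ Real.sqrt (∑ x, f x ^ 2) * Real.sqrt (∑ x, g x ^ 2) := by
  calc |∑ x, f x * g x| ≤ ∑ x, |f x| * |g x| := by
        simpa [abs_mul] using Finset.abs_sum_le_sum_abs (fun x => f x * g x) Finset.univ
    _ ≤ Real.sqrt (∑ x, |f x| ^ 2) * Real.sqrt (∑ x, |g x| ^ 2) :=
        Real.sum_mul_le_sqrt_mul_sqrt _ _ _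
    _ = _ := by simp [sq_abs]

lemma my_repr (q : ℕ) (h : E q) : ∑ i, h i • _root_.stdBasis q i = h := by
  simpa [_root_.stdBasis, EuclideanSpace.basisFun_apply] using
    (EuclideanSpace.basisFun (Fin q) ℝ).sum_repr h

lemma my_normsq (q : ℕ) (h : E q) : ∑ i, h i ^ 2 = ‖h‖ ^ 2 := by
  rw [EuclideanSpace.norm_eq, Real.sq_sqrt (by positivity)]
  simp [sq_abs]

lemma clm_expand {q : ℕ} {F : Type*} [NormedAddCommGroup F] [NormedSpace ℝ F]
    (L : E q →L[ℝ] F) (h : E q) : L h = ∑ i, h i • L (_root_.stdBasis q i) := by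
  conv_lhs => rw [← my_repr q h]
  rw [map_sum]
  simp only [_root_.map_smul]

lemma bilin_expand_s6 (q : ℕ) (B : E q →L[ℝ] E q →L[ℝ] ℝ) (h : E q) :
    B h h = ∑ i, ∑ j, (h i * h j) * B (_root_.stdBasis q i) (_root_.stdBasis q j) := by
  rw [clm_expand B h, ContinuousLinearMap.sum_apply]
  refine Finset.sum_congr rfl fun i _ => ?_
  rw [ContinuousLinearMap.smul_apply, clm_expand (B (_root_.stdBasis q i)) h, smul_eq_mul,
    Finset.mul_sum]
  refine Finset.sum_congr rfl fun j _ => ?_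
  rw [smul_eq_mul]
  ring

lemma trilin_expand (q : ℕ) (T : E q →L[ℝ] E q →L[ℝ] E q →L[ℝ] ℝ) (h : E q) :
    T h h h = ∑ i, ∑ j, ∑ k,
      (h i * h j * h k) * T (_root_.stdBasis q i) (_root_.stdBasis q j) (_root_.stdBasis q k) := by
  have hT := clm_expand (F := EuclideanSpace ℝ (Fin q) →L[ℝ] EuclideanSpace ℝ (Fin q) →L[ℝ] ℝ) T h
  rw [hT, ContinuousLinearMap.sum_apply, ContinuousLinearMap.sum_apply]
  refine Finset.sum_congr rfl fun i _ => ?_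
  rw [ContinuousLinearMap.smul_apply, ContinuousLinearMap.smul_apply, smul_eq_mul]
  rw [bilin_expand_s6 q (T (_root_.stdBasis q i)) h, Finset.mul_sum]
  refine Finset.sum_congr rfl fun j _ => ?_
  rw [Finset.mul_sum]
  refine Finset.sum_congr rfl fun k _ => ?_
  ring

lemma itd3_apply (q : ℕ) (f : E q → ℝ) (x : E q) (m : Fin 3 → E q) :
    iteratedFDeriv ℝ 3 f x m = fderiv ℝ (fderiv ℝ (fderiv ℝ f)) x (m 0) (m 1) (m 2) := by
  rw [iteratedFDeriv_succ_apply_right, iteratedFDeriv_two_apply]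
  rfl

lemma nonpos_of_deriv_nonpos {f g : ℝ → ℝ}
    (hd : ∀ t ∈ Set.Icc (0:ℝ) 1, HasDerivAt f (g t) t)
    (hg : ∀ t ∈ Set.Icc (0:ℝ) 1, g t ≤ 0) (h0 : f 0 = 0) :
    ∀ t ∈ Set.Icc (0:ℝ) 1, f t ≤ 0 := by
  intro t ht
  have hA : AntitoneOn f (Set.Icc (0:ℝ) 1) := by
    apply antitoneOn_of_deriv_nonpos (convex_Icc 0 1)
    · exact fun s hs => (hd s hs).continuousAt.continuousWithinAt
    · intro s hs
      rw [interior_Icc] at hs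
      exact (hd s (Set.Ioo_subset_Icc_self hs)).differentiableAt.differentiableWithinAt
    · intro s hs
      rw [interior_Icc] at hs
      rw [(hd s (Set.Ioo_subset_Icc_self hs)).deriv]
      exact hg s (Set.Ioo_subset_Icc_self hs)
  calc f t ≤ f 0 := hA (Set.left_mem_Icc.2 zero_le_one) ht ht.1
    _ = 0 := h0

lemma pair_bound (q : ℕ) (h : E q) (Mx : Fin q → Fin q → ℝ) :
    |∑ i, ∑ j, (h i * h j) * Mx i j| ≤ ‖h‖^2 * Real.sqrt (∑ i, ∑ j, (Mx i j)^2) := by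
  have h1 : ∑ i, ∑ j, (h i * h j) * Mx i j
      = ∑ p : Fin q × Fin q, (h p.1 * h p.2) * Mx p.1 p.2 := by
    rw [Fintype.sum_prod_type]
  have h2 : ∑ p : Fin q × Fin q, (h p.1 * h p.2)^2 = (‖h‖^2)^2 := by
    rw [Fintype.sum_prod_type, ← my_normsq q h]
    simp_rw [mul_pow, ← Finset.sum_mul_sum]
    ring
  have h3 : ∑ p : Fin q × Fin q, (Mx p.1 p.2)^2 = ∑ i, ∑ j, (Mx i j)^2 := by
    rw [Fintype.sum_prod_type]
  calc |∑ i, ∑ j, (h i * h j) * Mx i j|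
      ≤ Real.sqrt (∑ p : Fin q × Fin q, (h p.1 * h p.2)^2)
        * Real.sqrt (∑ p : Fin q × Fin q, (Mx p.1 p.2)^2) := by
        rw [h1]; exact my_cs _ _
    _ = ‖h‖^2 * Real.sqrt (∑ i, ∑ j, (Mx i j)^2) := by
        rw [h2, h3, show (‖h‖^2)^2 = (‖h‖^2)^2 from rfl, Real.sqrt_sq (by positivity)]

lemma triple_bound (q : ℕ) (h : E q) (T : Fin q → Fin q → Fin q → ℝ) :
    |∑ i, ∑ j, ∑ k, (h i * h j * h k) * T i j k|
      ≤ ‖h‖^3 * Real.sqrt (∑ i, ∑ j, ∑ k, (T i j k)^2) := by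
  have h1 : ∑ i, ∑ j, ∑ k, (h i * h j * h k) * T i j k
      = ∑ p : Fin q × Fin q × Fin q, (h p.1 * h p.2.1 * h p.2.2) * T p.1 p.2.1 p.2.2 := by
    rw [Fintype.sum_prod_type]
    exact Finset.sum_congr rfl fun i _ => by rw [Fintype.sum_prod_type]
  have h2 : ∑ p : Fin q × Fin q × Fin q, (h p.1 * h p.2.1 * h p.2.2)^2 = (‖h‖^2)^3 := by
    rw [Fintype.sum_prod_type, ← my_normsq q h]
    simp_rw [Fintype.sum_prod_type, mul_pow, ← Finset.sum_mul_sum]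
    rw [← Finset.sum_mul, ← Finset.sum_mul_sum]
    ring
  have h3 : ∑ p : Fin q × Fin q × Fin q, (T p.1 p.2.1 p.2.2)^2
      = ∑ i, ∑ j, ∑ k, (T i j k)^2 := by
    rw [Fintype.sum_prod_type]
    exact Finset.sum_congr rfl fun i _ => by rw [Fintype.sum_prod_type]
  calc |∑ i, ∑ j, ∑ k, (h i * h j * h k) * T i j k|
      ≤ Real.sqrt (∑ p : Fin q × Fin q × Fin q, (h p.1 * h p.2.1 * h p.2.2)^2)
        * Real.sqrt (∑ p : Fin q × Fin q × Fin q, (T p.1 p.2.1 p.2.2)^2) := by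
        rw [h1]; exact my_cs _ _
    _ = ‖h‖^3 * Real.sqrt (∑ i, ∑ j, ∑ k, (T i j k)^2) := by
        rw [h2, h3, show (‖h‖^2)^3 = (‖h‖^3)^2 by ring, Real.sqrt_sq (by positivity)]

/-- The deterministic estimate behind (5.9): on the event `G_{1,n}`, for every
`u ∈ Ûₙ ∩ Aₙ` one has `H(θ̂ + n^{-1/2}u) - H(θ̂) ≤ -λ₀ |u|²`. -/
theorem stmt6
    (q : ℕ) (hq : 1 ≤ q)
    (Θ : Set (EuclideanSpace ℝ (Fin q))) (hΘopen : IsOpen Θ) (hΘconv : Convex ℝ Θ)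
    (H : EuclideanSpace ℝ (Fin q) → ℝ) (hH : ContDiffOn ℝ 3 H Θ)
    (S : ℝ) (hS : ∀ θ ∈ Θ, thirdFrob q H θ ≤ S)
    (n : ℕ) (hn : 1 ≤ n) (lam : ℝ) (hlam : 0 < lam)
    (θhat : EuclideanSpace ℝ (Fin q)) (hθhat : θhat ∈ Θ)
    (hgrad : fderiv ℝ H θhat = 0)
    (A : Fin q → Fin q → ℝ) (hAsymm : ∀ i j, A i j = A j i)
    (hA : ∀ v : EuclideanSpace ℝ (Fin q), 4 * lam * ‖v‖ ^ 2 ≤ ∑ i, ∑ j, v i * A i j * v j)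
    (hHess : frobNorm q (fun i j => -(1 / (n : ℝ)) * hessEntry q H θhat i j - A i j) ≤ lam)
    (hthird : (n : ℝ) ^ (-(1 : ℝ) / 8) * (1 / (n : ℝ)) * S ≤ 3 * lam) :
    ∀ u : EuclideanSpace ℝ (Fin q),
      θhat + ((n : ℝ) ^ (-(1 : ℝ) / 2)) • u ∈ Θ → ‖u‖ ≤ (n : ℝ) ^ ((3 : ℝ) / 8) →
      H (θhat + ((n : ℝ) ^ (-(1 : ℝ) / 2)) • u) - H θhat ≤ -lam * ‖u‖ ^ 2 := by
  intro u hu hnorm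
  have hn0 : (0:ℝ) < (n:ℝ) := by exact_mod_cast Nat.lt_of_lt_of_le Nat.zero_lt_one hn
  set h : EuclideanSpace ℝ (Fin q) := ((n : ℝ) ^ (-(1 : ℝ) / 2)) • u with hh
  set c : ℝ → EuclideanSpace ℝ (Fin q) := fun t => θhat + t • h with hcdef
  have hseg : ∀ t ∈ Set.Icc (0:ℝ) 1, c t ∈ Θ := by
    intro t ht
    have hrw : c t = (1 - t) • θhat + t • (θhat + h) := by
      simp only [hcdef]; module
    rw [hrw]
    exact hΘconv hθhat hu (by linarith [ht.2]) ht.1 (by ring)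
  have hcd : ∀ t : ℝ, HasDerivAt c h t := by
    intro t
    simpa [hcdef] using (((hasDerivAt_id t).smul_const h).const_add θhat)
  have hC : ∀ x ∈ Θ, ContDiffAt ℝ 3 H x := fun x hx => hH.contDiffAt (hΘopen.mem_nhds hx)
  have hd0 : ∀ x ∈ Θ, DifferentiableAt ℝ H x := fun x hx =>
    (hC x hx).differentiableAt (by norm_num)
  have hd1 : ∀ x ∈ Θ, DifferentiableAt ℝ (fderiv ℝ H) x := fun x hx =>
    ((hC x hx).fderiv_right (m := 2) (by norm_num)).differentiableAt (by norm_num)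
  have hd2 : ∀ x ∈ Θ, DifferentiableAt ℝ (fderiv ℝ (fderiv ℝ H)) x := fun x hx =>
    (((hC x hx).fderiv_right (m := 2) (by norm_num)).fderiv_right (m := 1)
      (by norm_num)).differentiableAt (by norm_num)
  -- the four scalar functions
  set F0 : ℝ → ℝ := fun t => H (c t) with hF0def
  set F1 : ℝ → ℝ := fun t => fderiv ℝ H (c t) h with hF1def
  set F2 : ℝ → ℝ := fun t => fderiv ℝ (fderiv ℝ H) (c t) h h with hF2def
  set F3 : ℝ → ℝ := fun t => fderiv ℝ (fderiv ℝ (fderiv ℝ H)) (c t) h h h with hF3def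
  have hF0d : ∀ t ∈ Set.Icc (0:ℝ) 1, HasDerivAt F0 (F1 t) t := fun t ht =>
    (hd0 _ (hseg t ht)).hasFDerivAt.comp_hasDerivAt t (hcd t)
  have hF1d : ∀ t ∈ Set.Icc (0:ℝ) 1, HasDerivAt F1 (F2 t) t := by
    intro t ht
    have h1 : HasDerivAt (fun s => fderiv ℝ H (c s)) (fderiv ℝ (fderiv ℝ H) (c t) h) t :=
      (hd1 _ (hseg t ht)).hasFDerivAt.comp_hasDerivAt t (hcd t)
    simpa using h1.clm_apply (hasDerivAt_const t h)
  have hF2d : ∀ t ∈ Set.Icc (0:ℝ) 1, HasDerivAt F2 (F3 t) t := by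
    intro t ht
    have h1 : HasDerivAt (fun s => fderiv ℝ (fderiv ℝ H) (c s))
        (fderiv ℝ (fderiv ℝ (fderiv ℝ H)) (c t) h) t :=
      (hd2 _ (hseg t ht)).hasFDerivAt.comp_hasDerivAt (E := EuclideanSpace ℝ (Fin q) →L[ℝ] EuclideanSpace ℝ (Fin q) →L[ℝ] ℝ) t (hcd t)
    have h2 := h1.clm_apply (hasDerivAt_const t h)
    simpa using h2.clm_apply (hasDerivAt_const t h)
  set M : ℝ := S * ‖h‖^3 with hMdef
  have hS0 : 0 ≤ S := le_trans (Real.sqrt_nonneg _) (hS θhat hθhat)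
  have hF3b : ∀ t ∈ Set.Icc (0:ℝ) 1, F3 t ≤ M := by
    intro t ht
    have hx := hseg t ht
    have hexp : F3 t = ∑ i, ∑ j, ∑ k, (h i * h j * h k)
        * (iteratedFDeriv ℝ 3 H (c t) ![_root_.stdBasis q i, _root_.stdBasis q j, _root_.stdBasis q k]) := by
      show fderiv ℝ (fderiv ℝ (fderiv ℝ H)) (c t) h h h = _
      rw [trilin_expand q (fderiv ℝ (fderiv ℝ (fderiv ℝ H)) (c t)) h]
      refine Finset.sum_congr rfl fun i _ => Finset.sum_congr rfl fun j _ =>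
        Finset.sum_congr rfl fun k _ => ?_
      rw [itd3_apply]
      simp
    calc F3 t ≤ |F3 t| := le_abs_self _
      _ ≤ ‖h‖^3 * Real.sqrt (∑ i, ∑ j, ∑ k,
            (iteratedFDeriv ℝ 3 H (c t) ![_root_.stdBasis q i, _root_.stdBasis q j, _root_.stdBasis q k])^2) := by
          rw [hexp]; exact triple_bound q h _
      _ = ‖h‖^3 * thirdFrob q H (c t) := rfl
      _ ≤ ‖h‖^3 * S := mul_le_mul_of_nonneg_left (hS _ hx) (by positivity)
      _ = M := by rw [hMdef]; ring
  have hc0 : c 0 = θhat := by simp [hcdef]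
  have hF10 : F1 0 = 0 := by
    show fderiv ℝ H (c 0) h = 0
    rw [hc0, hgrad]; simp
  have hF20 : F2 0 = ∑ i, ∑ j, (h i * h j) * hessEntry q H θhat i j := by
    show fderiv ℝ (fderiv ℝ H) (c 0) h h = _
    rw [hc0, bilin_expand_s6 q (fderiv ℝ (fderiv ℝ H) θhat) h]
    refine Finset.sum_congr rfl fun i _ => Finset.sum_congr rfl fun j _ => ?_
    congr 1
    rw [hessEntry, iteratedFDeriv_two_apply]
    simp
  -- norm arithmetic
  have hr2 : ((n:ℝ)^(-(1:ℝ)/2))^2 = ((n:ℝ))⁻¹ := by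
    rw [← Real.rpow_natCast ((n:ℝ)^(-(1:ℝ)/2)) 2, ← Real.rpow_mul hn0.le]
    norm_num
    exact Real.rpow_neg_one _
  have hrpos : 0 < (n:ℝ)^(-(1:ℝ)/2) := Real.rpow_pos_of_pos hn0 _
  have hhn : ‖h‖^2 = ((n:ℝ))⁻¹ * ‖u‖^2 := by
    rw [hh, norm_smul, mul_pow, ← hr2, Real.norm_eq_abs, sq_abs]
  have hnh : (n:ℝ) * ‖h‖^2 = ‖u‖^2 := by
    rw [hhn]; field_simp
  -- quadratic form bound
  have hEbound : |∑ i, ∑ j, (h i * h j) * (-(1/(n:ℝ)) * hessEntry q H θhat i j - A i j)|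
      ≤ ‖h‖^2 * lam := by
    calc |∑ i, ∑ j, (h i * h j) * (-(1/(n:ℝ)) * hessEntry q H θhat i j - A i j)|
        ≤ ‖h‖^2 * Real.sqrt (∑ i, ∑ j, (-(1/(n:ℝ)) * hessEntry q H θhat i j - A i j)^2) :=
          pair_bound q h _
      _ ≤ ‖h‖^2 * lam := mul_le_mul_of_nonneg_left hHess (by positivity)
  have hAq : 4*lam*‖h‖^2 ≤ ∑ i, ∑ j, (h i * h j) * A i j := by
    calc 4*lam*‖h‖^2 ≤ ∑ i, ∑ j, h i * A i j * h j := hA h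
      _ = ∑ i, ∑ j, (h i * h j) * A i j :=
        Finset.sum_congr rfl fun i _ => Finset.sum_congr rfl fun j _ => by ring
  have hF2le : F2 0 ≤ -3*lam*‖u‖^2 := by
    rw [hF20]
    have hsplitsum : ∑ i, ∑ j, (h i * h j) * hessEntry q H θhat i j
        = -(n:ℝ) * ((∑ i, ∑ j, (h i * h j) * A i j)
          + (∑ i, ∑ j, (h i * h j) * (-(1/(n:ℝ)) * hessEntry q H θhat i j - A i j))) := by
      rw [← Finset.sum_add_distrib, Finset.mul_sum]
      refine Finset.sum_congr rfl fun i _ => ?_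
      rw [← Finset.sum_add_distrib, Finset.mul_sum]
      refine Finset.sum_congr rfl fun j _ => ?_
      field_simp
      ring
    rw [hsplitsum]
    have hY := (abs_le.1 hEbound).1
    have hXY : 3*lam*‖h‖^2 ≤ (∑ i, ∑ j, (h i * h j) * A i j)
        + (∑ i, ∑ j, (h i * h j) * (-(1/(n:ℝ)) * hessEntry q H θhat i j - A i j)) := by
      linarith
    calc -(n:ℝ) * ((∑ i, ∑ j, (h i * h j) * A i j)
          + (∑ i, ∑ j, (h i * h j) * (-(1/(n:ℝ)) * hessEntry q H θhat i j - A i j)))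
        ≤ -(n:ℝ) * (3*lam*‖h‖^2) := mul_le_mul_of_nonpos_left hXY (by linarith)
      _ = -3*lam*‖u‖^2 := by rw [← hnh]; ring
  -- M bound
  have hMle : M ≤ 3*lam*‖u‖^2 := by
    have hle3 : ‖u‖^3 ≤ (n:ℝ)^((3:ℝ)/8) * ‖u‖^2 := by
      calc ‖u‖^3 = ‖u‖ * ‖u‖^2 := by ring
        _ ≤ (n:ℝ)^((3:ℝ)/8) * ‖u‖^2 := mul_le_mul_of_nonneg_right hnorm (by positivity)
    have hhcube : ‖h‖^3 = (n:ℝ)^(-(3:ℝ)/2) * ‖u‖^3 := by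
      rw [hh, norm_smul, Real.norm_eq_abs, abs_of_pos hrpos, mul_pow]
      congr 1
      rw [← Real.rpow_natCast ((n:ℝ)^(-(1:ℝ)/2)) 3, ← Real.rpow_mul hn0.le]
      norm_num
    have hcollect : (n:ℝ)^(-(3:ℝ)/2) * (n:ℝ)^((3:ℝ)/8) = (n:ℝ)^(-(1:ℝ)/8) * (1/(n:ℝ)) := by
      rw [← Real.rpow_add hn0, one_div, ← Real.rpow_neg_one (n:ℝ), ← Real.rpow_add hn0]
      norm_num
    calc M = S * ((n:ℝ)^(-(3:ℝ)/2) * ‖u‖^3) := by rw [hMdef, hhcube]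
      _ ≤ S * ((n:ℝ)^(-(3:ℝ)/2) * ((n:ℝ)^((3:ℝ)/8) * ‖u‖^2)) := by
          refine mul_le_mul_of_nonneg_left ?_ hS0
          exact mul_le_mul_of_nonneg_left hle3 (by positivity)
      _ = ((n:ℝ)^(-(3:ℝ)/2) * (n:ℝ)^((3:ℝ)/8)) * S * ‖u‖^2 := by ring
      _ = ((n:ℝ)^(-(1:ℝ)/8) * (1/(n:ℝ)) * S) * ‖u‖^2 := by rw [hcollect]
      _ ≤ (3*lam) * ‖u‖^2 := mul_le_mul_of_nonneg_right hthird (by positivity)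
      _ = 3*lam*‖u‖^2 := by ring
  -- Taylor chain
  have hg2 : ∀ t ∈ Set.Icc (0:ℝ) 1, F2 t - F2 0 - t * M ≤ 0 := by
    apply nonpos_of_deriv_nonpos (g := fun t => F3 t - M)
    · intro t ht
      have h1 := ((hF2d t ht).sub_const (F2 0)).sub ((hasDerivAt_id t).mul_const M)
      have h2 : HasDerivAt (fun t => F2 t - F2 0 - t * M) _ t := h1
      convert h2 using 1
      ring
    · intro t ht
      have := hF3b t ht; linarith
    · simp
  have hg1 : ∀ t ∈ Set.Icc (0:ℝ) 1, F1 t - F1 0 - t * F2 0 - t^2 * (M/2) ≤ 0 := by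
    apply nonpos_of_deriv_nonpos (g := fun t => F2 t - F2 0 - t * M)
    · intro t ht
      have h1 := (((hF1d t ht).sub_const (F1 0)).sub
        ((hasDerivAt_id t).mul_const (F2 0))).sub ((hasDerivAt_pow 2 t).mul_const (M/2))
      have h2 : HasDerivAt (fun t => F1 t - F1 0 - t * F2 0 - t^2 * (M/2)) _ t := h1
      convert h2 using 1
      push_cast
      ring
    · exact hg2
    · simp
  have hg0 : ∀ t ∈ Set.Icc (0:ℝ) 1,
      F0 t - F0 0 - t * F1 0 - t^2 * (F2 0 / 2) - t^3 * (M/6) ≤ 0 := by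
    apply nonpos_of_deriv_nonpos (g := fun t => F1 t - F1 0 - t * F2 0 - t^2 * (M/2))
    · intro t ht
      have h1 := ((((hF0d t ht).sub_const (F0 0)).sub
        ((hasDerivAt_id t).mul_const (F1 0))).sub
        ((hasDerivAt_pow 2 t).mul_const (F2 0 / 2))).sub
        ((hasDerivAt_pow 3 t).mul_const (M/6))
      have h2 : HasDerivAt (fun t => F0 t - F0 0 - t * F1 0 - t^2 * (F2 0 / 2) - t^3 * (M/6)) _ t := h1
      convert h2 using 1
      push_cast
      ring
    · exact hg1
    · simp
  have hkey := hg0 1 (Set.right_mem_Icc.2 zero_le_one)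
  have hF01 : F0 1 = H (θhat + h) := by
    show H (c 1) = _
    simp [hcdef]
  have hF00 : F0 0 = H θhat := by
    show H (c 0) = _
    rw [hc0]
  rw [← hF01, ← hF00]
  rw [hF10] at hkey
  norm_num at hkey
  linarith


end
end

section
/- Let Sigma_0 and Sigma be real symmetric positive definite p x p matrices. Then -(1/2) tr(Sigma^{-1} Sigma_0) - (1/2) log det Sigma <= -p/2 - (1/2) log det Sigma_0, with equality if and only if Sigma = Sigma_0. -/
open MeasureTheory Filter Matrix

noncomputable section

lemma trace_eq_sum_eig (n : ℕ) (B : Matrix (Fin n) (Fin n) ℝ) (hB : B.PosDef) :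
    B.trace = ∑ i, hB.1.eigenvalues i := by
  conv_lhs => rw [hB.1.spectral_theorem, Unitary.conjStarAlgAut_apply]
  rw [trace_mul_cycle,
    show (star hB.1.eigenvectorUnitary : Matrix (Fin n) (Fin n) ℝ) *
      (hB.1.eigenvectorUnitary : Matrix (Fin n) (Fin n) ℝ) = 1 from
    Unitary.coe_star_mul_self _, one_mul, trace_diagonal]
  simp

lemma key (n : ℕ) (B : Matrix (Fin n) (Fin n) ℝ) (hB : B.PosDef) :
    (n : ℝ) ≤ B.trace - Real.log B.det ∧
      ((n : ℝ) = B.trace - Real.log B.det ↔ B = 1) := by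
  have hev := hB.eigenvalues_pos
  have hdet : B.det = ∏ i, hB.1.eigenvalues i := by
    rw [hB.1.det_eq_prod_eigenvalues]; norm_num
  have hlog : Real.log B.det = ∑ i, Real.log (hB.1.eigenvalues i) := by
    rw [hdet, Real.log_prod]
    exact fun i _ => (hev i).ne'
  have htr := trace_eq_sum_eig n B hB
  have hterm : ∀ i, (1 : ℝ) ≤ hB.1.eigenvalues i - Real.log (hB.1.eigenvalues i) := by
    intro i
    have := Real.log_le_sub_one_of_pos (hev i)
    linarith
  have hsum : (n : ℝ) ≤ B.trace - Real.log B.det := by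
    rw [htr, hlog, ← Finset.sum_sub_distrib]
    calc (n : ℝ) = ∑ _i : Fin n, (1 : ℝ) := by simp
    _ ≤ _ := Finset.sum_le_sum fun i _ => hterm i
  refine ⟨hsum, ?_, ?_⟩
  · intro heq
    have hall : ∀ i, hB.1.eigenvalues i = 1 := by
      by_contra hc
      push_neg at hc
      obtain ⟨j, hj⟩ := hc
      have hstrict : (∑ _i : Fin n, (1 : ℝ)) <
          ∑ i, (hB.1.eigenvalues i - Real.log (hB.1.eigenvalues i)) := by
        apply Finset.sum_lt_sum (fun i _ => hterm i) ⟨j, Finset.mem_univ j, ?_⟩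
        have := Real.log_lt_sub_one_of_pos (hev j) hj
        linarith
      rw [htr, hlog, ← Finset.sum_sub_distrib] at heq
      simp only [Finset.sum_const, Finset.card_univ, Fintype.card_fin, nsmul_eq_mul,
        mul_one] at hstrict
      linarith
    conv_lhs => rw [hB.1.spectral_theorem, Unitary.conjStarAlgAut_apply]
    have hD : (Matrix.diagonal (RCLike.ofReal ∘ hB.1.eigenvalues) :
        Matrix (Fin n) (Fin n) ℝ) = 1 := by
      ext i k
      rcases eq_or_ne i k with rfl | h
      · simp [hall]
      · simp [Matrix.diagonal_apply_ne _ h, Matrix.one_apply_ne h]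
    rw [hD, mul_one,
      show (hB.1.eigenvectorUnitary : Matrix (Fin n) (Fin n) ℝ) *
        (star hB.1.eigenvectorUnitary : Matrix (Fin n) (Fin n) ℝ) = 1 from
      Unitary.coe_mul_star_self _]
  · rintro rfl
    simp


/-- For positive definite `Σ₀`, `Σ`:
`-(1/2) tr(Σ⁻¹ Σ₀) - (1/2) log det Σ ≤ -p/2 - (1/2) log det Σ₀`,
with equality iff `Σ = Σ₀`. -/
theorem stmt9
    (p : ℕ) (hp : 1 ≤ p)
    (S0 S1 : Matrix (Fin p) (Fin p) ℝ) (hS0 : S0.PosDef) (hS1 : S1.PosDef) :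
    (-(1 / 2) * (S1⁻¹ * S0).trace - (1 / 2) * Real.log S1.det
        ≤ -(p : ℝ) / 2 - (1 / 2) * Real.log S0.det) ∧
      (-(1 / 2) * (S1⁻¹ * S0).trace - (1 / 2) * Real.log S1.det
          = -(p : ℝ) / 2 - (1 / 2) * Real.log S0.det ↔ S1 = S0) := by
  set C := (open scoped MatrixOrder in CFC.sqrt S0) with hCdef
  have hCH : Cᴴ = C := by open scoped MatrixOrder in exact (CFC.sqrt_nonneg S0).posSemidef.1
  have hCC : C * C = S0 := by open scoped MatrixOrder in exact CFC.sqrt_mul_sqrt_self S0 hS0.posSemidef.nonneg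
  have hdetS0 : 0 < S0.det := hS0.det_pos
  have hdetS1 : 0 < S1.det := hS1.det_pos
  have hCdet2 : C.det * C.det = S0.det := by rw [← det_mul, hCC]
  have hCdetne : C.det ≠ 0 := by
    intro h; rw [h, mul_zero] at hCdet2; exact hdetS0.ne (hCdet2)
  have hCunit : IsUnit C.det := isUnit_iff_ne_zero.mpr hCdetne
  have hS1unit : IsUnit S1.det := isUnit_iff_ne_zero.mpr hdetS1.ne'
  -- B is posdef
  have hB : (C * S1⁻¹ * C).PosDef := by
    refine PosDef.of_dotProduct_mulVec_pos ?_ ?_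
    · have := isHermitian_conjTranspose_mul_mul C hS1.inv.1
      rwa [hCH] at this
    · intro x hx
      have hx' : C *ᵥ x ≠ 0 := by
        intro h
        apply hx
        have : C⁻¹ *ᵥ (C *ᵥ x) = x := by
          rw [mulVec_mulVec, nonsing_inv_mul _ hCunit, one_mulVec]
        rw [h, mulVec_zero] at this
        exact this.symm
      have := hS1.inv.dotProduct_mulVec_pos hx'
      have hrw : C * S1⁻¹ * C = Cᴴ * S1⁻¹ * C := by rw [hCH]
      rw [hrw]
      simpa only [star_mulVec, dotProduct_mulVec, vecMul_vecMul] using this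
  have htr : (C * S1⁻¹ * C).trace = (S1⁻¹ * S0).trace := by
    rw [trace_mul_cycle, hCC, trace_mul_comm]
  have hdetB : (C * S1⁻¹ * C).det = S0.det / S1.det := by
    rw [det_mul, det_mul, det_nonsing_inv, div_eq_mul_inv, ← hCdet2, Ring.inverse_eq_inv']
    ring
  have hlogB : Real.log (C * S1⁻¹ * C).det = Real.log S0.det - Real.log S1.det := by
    rw [hdetB, Real.log_div hdetS0.ne' hdetS1.ne']
  obtain ⟨hineq, hiff⟩ := key p _ hB
  rw [htr, hlogB] at hineq hiff
  have hB1 : C * S1⁻¹ * C = 1 ↔ S1 = S0 := by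
    constructor
    · intro h
      have h2 : S1⁻¹ = C⁻¹ * C⁻¹ := by
        have hh : C⁻¹ * (C * S1⁻¹ * C) * C⁻¹ = C⁻¹ * 1 * C⁻¹ := by rw [h]
        calc S1⁻¹ = (C⁻¹ * C) * S1⁻¹ * (C * C⁻¹) := by
              rw [nonsing_inv_mul _ hCunit, mul_nonsing_inv _ hCunit, one_mul, mul_one]
        _ = C⁻¹ * (C * S1⁻¹ * C) * C⁻¹ := by simp only [mul_assoc]
        _ = C⁻¹ * 1 * C⁻¹ := hh
        _ = C⁻¹ * C⁻¹ := by rw [mul_one]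
      have h3 : S1⁻¹ = S0⁻¹ := by rw [h2, ← Matrix.mul_inv_rev, hCC]
      calc S1 = S1⁻¹⁻¹ := (nonsing_inv_nonsing_inv _ hS1unit).symm
      _ = S0⁻¹⁻¹ := by rw [h3]
      _ = S0 := nonsing_inv_nonsing_inv _ (isUnit_iff_ne_zero.mpr hdetS0.ne')
    · rintro rfl
      have : S1⁻¹ = C⁻¹ * C⁻¹ := by rw [← Matrix.mul_inv_rev, hCC]
      rw [this]
      rw [show C * (C⁻¹ * C⁻¹) * C = (C * C⁻¹) * (C⁻¹ * C) by simp only [mul_assoc],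
        mul_nonsing_inv _ hCunit, nonsing_inv_mul _ hCunit, one_mul]
  rw [← hB1]
  constructor
  · linarith
  · rw [← hiff]
    constructor <;> intro h <;> linarith

end
end

section
/- Assume (i) the derivative of Sigma at theta_0, as a linear map from R^q to the space of real symmetric p x p matrices, is injective, and (ii) for every theta in cl(Theta), Sigma(theta) = Sigma(theta_0) implies theta = theta_0. Then there exists chi > 0 such that Y(theta) <= -chi |theta - theta_0|^2 for all theta in cl(Theta). -/
open MeasureTheory Filter Matrix

noncomputable section

namespace S10

def frobSq {p : ℕ} (A : Matrix (Fin p) (Fin p) ℝ) : ℝ := ∑ i, ∑ j, (A i j)^2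

lemma frobSq_nonneg {p : ℕ} (A : Matrix (Fin p) (Fin p) ℝ) : 0 ≤ frobSq A := by
  apply Finset.sum_nonneg; intro i _; apply Finset.sum_nonneg; intro j _; positivity

lemma frobSq_neg {p : ℕ} (A : Matrix (Fin p) (Fin p) ℝ) : frobSq (-A) = frobSq A := by
  simp [frobSq]

lemma frobSq_mul_le {p : ℕ} (A B : Matrix (Fin p) (Fin p) ℝ) :
    frobSq (A * B) ≤ frobSq A * frobSq B := by
  unfold frobSq
  calc ∑ i, ∑ j, ((A * B) i j)^2
      ≤ ∑ i, ∑ j, (∑ k, (A i k)^2) * (∑ k, (B k j)^2) := by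
        apply Finset.sum_le_sum; intro i _; apply Finset.sum_le_sum; intro j _
        rw [Matrix.mul_apply]
        exact Finset.sum_mul_sq_le_sq_mul_sq _ _ _
    _ = (∑ i, ∑ k, (A i k)^2) * (∑ j, ∑ k, (B k j)^2) := by
        rw [← Finset.sum_mul_sum]
    _ = (∑ i, ∑ k, (A i k)^2) * (∑ k, ∑ j, (B k j)^2) := by
        rw [Finset.sum_comm (s := Finset.univ) (t := Finset.univ) (f := fun j k => (B k j)^2)]

lemma key_scalar {x M : ℝ} (hx : 0 < x) (hxM : x ≤ M) :
    (x - 1)^2 / (Real.sqrt M + 1)^2 ≤ x - 1 - Real.log x := by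
  set s := Real.sqrt x with hs
  have hs0 : 0 < s := Real.sqrt_pos.mpr hx
  have hss : s * s = x := Real.mul_self_sqrt hx.le
  have hlog : Real.log x ≤ 2 * (s - 1) := by
    have h1 : Real.log s ≤ s - 1 := Real.log_le_sub_one_of_pos hs0
    have : Real.log x = 2 * Real.log s := by
      rw [← hss, Real.log_mul hs0.ne' hs0.ne']; ring
    linarith
  have h2 : (s - 1)^2 ≤ x - 1 - Real.log x := by nlinarith
  have hsM : s ≤ Real.sqrt M := Real.sqrt_le_sqrt hxM
  have hM1 : (0:ℝ) < (Real.sqrt M + 1)^2 := by positivity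
  rw [div_le_iff₀ hM1]
  have h3 : (x - 1)^2 ≤ (s - 1)^2 * (Real.sqrt M + 1)^2 := by
    have : x - 1 = (s - 1) * (s + 1) := by nlinarith
    rw [this]
    have h4 : (s+1)^2 ≤ (Real.sqrt M + 1)^2 := by nlinarith
    nlinarith [sq_nonneg (s-1), sq_nonneg (s+1)]
  nlinarith [sq_nonneg (s-1)]

lemma trace_eq_sum_eigen {p : ℕ} {N : Matrix (Fin p) (Fin p) ℝ} (hN : N.IsHermitian) :
    N.trace = ∑ i, hN.eigenvalues i := by
  conv_lhs => rw [hN.spectral_theorem, Unitary.conjStarAlgAut_apply]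
  rw [Matrix.trace_mul_cycle]
  rw [(Matrix.mem_unitaryGroup_iff').mp (hN.eigenvectorUnitary).2]
  rw [one_mul, Matrix.trace_diagonal]
  simp [RCLike.ofReal_real_eq_id]

lemma trace_sq_eq_sum_eigen_sq {p : ℕ} {N : Matrix (Fin p) (Fin p) ℝ} (hN : N.IsHermitian) :
    (N * N).trace = ∑ i, (hN.eigenvalues i)^2 := by
  conv_lhs => rw [hN.spectral_theorem, Unitary.conjStarAlgAut_apply]
  set U : Matrix (Fin p) (Fin p) ℝ := (hN.eigenvectorUnitary : Matrix (Fin p) (Fin p) ℝ)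
  set D : Matrix (Fin p) (Fin p) ℝ := diagonal (RCLike.ofReal ∘ hN.eigenvalues)
  have hUU : star U * U = 1 := (Matrix.mem_unitaryGroup_iff').mp (hN.eigenvectorUnitary).2
  have : (U * D * star U) * (U * D * star U) = U * (D * D) * star U := by
    calc (U * D * star U) * (U * D * star U) = U * D * (star U * U) * D * star U := by
          noncomm_ring
      _ = U * (D * D) * star U := by rw [hUU]; noncomm_ring
  rw [this, Matrix.trace_mul_cycle, hUU, one_mul, Matrix.diagonal_mul_diagonal,
    Matrix.trace_diagonal]
  simp [RCLike.ofReal_real_eq_id, sq]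

lemma frobSq_eq_trace {p : ℕ} {N : Matrix (Fin p) (Fin p) ℝ} (hsymm : N.IsHermitian) :
    (∑ i, ∑ j, (N i j)^2) = (N * N).trace := by
  rw [Matrix.trace]
  simp only [Matrix.diag_apply, Matrix.mul_apply]
  apply Finset.sum_congr rfl; intro i _
  apply Finset.sum_congr rfl; intro j _
  have h : N j i = N i j := by
    have := congrFun (congrFun hsymm.eq j) i
    simpa [Matrix.conjTranspose_apply] using this.symm
  rw [h, sq]



lemma posDef_conj {p : ℕ} {A L : Matrix (Fin p) (Fin p) ℝ} (hA : A.PosDef)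
    (hLh : L.IsHermitian) (hdetL : IsUnit L.det) : (L * A * L).PosDef := by
  have := hA.conjTranspose_mul_mul_same (B := L)
    (Matrix.mulVec_injective_of_isUnit ((Matrix.isUnit_iff_isUnit_det L).mpr hdetL))
  rwa [hLh.eq] at this
open scoped MatrixOrder in
lemma stepA {p : ℕ} (S0 : Matrix (Fin p) (Fin p) ℝ) (h0 : S0.PosDef) (M C : ℝ) :
    ∃ c > (0:ℝ), ∀ A : Matrix (Fin p) (Fin p) ℝ, A.PosDef →
      (A⁻¹ * S0).trace ≤ M → frobSq A ≤ C →
      -(1/2) * ((A⁻¹ - S0⁻¹) * S0).trace - (1/2) * Real.log (A.det / S0.det)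
        ≤ -c * frobSq (A - S0) := by
  classical
  set L := CFC.sqrt S0 with hLdef
  have hL2 : L * L = S0 := CFC.sqrt_mul_sqrt_self S0 h0.posSemidef.nonneg
  have hLh : L.IsHermitian := (CFC.sqrt_nonneg S0).posSemidef.isHermitian
  have hdet0 : 0 < S0.det := h0.det_pos
  have hdetL : IsUnit L.det := by
    have : L.det * L.det = S0.det := by rw [← Matrix.det_mul, hL2]
    refine isUnit_iff_ne_zero.mpr fun h => ?_
    rw [h, mul_zero] at this
    exact hdet0.ne this
  set C' : ℝ := max C 0 + 1 with hC'
  set K : ℝ := frobSq L⁻¹ * frobSq L + 1 with hK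
  have hC'pos : 0 < C' := by positivity
  have hKpos : 0 < K := by
    have h := mul_nonneg (frobSq_nonneg L⁻¹) (frobSq_nonneg L)
    rw [hK]; linarith
  set c : ℝ := 1 / (2 * (Real.sqrt M + 1)^2 * (C' * K)) with hc
  have hsM : (0:ℝ) < (Real.sqrt M + 1)^2 := by
    have := Real.sqrt_nonneg M; positivity
  have hcpos : 0 < c := by positivity
  refine ⟨c, hcpos, ?_⟩
  intro A hA htr hfC
  have hdetA : 0 < A.det := hA.det_pos
  set N := L * A⁻¹ * L with hN
  have hNpd : N.PosDef := posDef_conj hA.inv hLh hdetL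
  have hNh : N.IsHermitian := hNpd.1
  set μ := hNh.eigenvalues with hμ
  have hμpos : ∀ i, 0 < μ i := hNpd.eigenvalues_pos
  have htrN : N.trace = (A⁻¹ * S0).trace := by
    rw [hN, Matrix.trace_mul_cycle, hL2, Matrix.trace_mul_comm]
  have htrsum : N.trace = ∑ i, μ i := trace_eq_sum_eigen hNh
  -- each eigenvalue bounded by M
  have hμM : ∀ i, μ i ≤ M := by
    intro i
    have h1 : μ i ≤ ∑ j, μ j := by
      have : ∑ j ∈ {i}, μ j ≤ ∑ j, μ j :=
        Finset.sum_le_sum_of_subset_of_nonneg (Finset.subset_univ _)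
          (fun j _ _ => (hμpos j).le)
      simpa using this
    calc μ i ≤ ∑ j, μ j := h1
      _ = N.trace := htrsum.symm
      _ = (A⁻¹ * S0).trace := htrN
      _ ≤ M := htr
  -- determinant
  have hdetLL : L.det * L.det = S0.det := by rw [← Matrix.det_mul, hL2]
  have hdetN : N.det = S0.det / A.det := by
    have h4 : A⁻¹.det = (A.det)⁻¹ := by rw [Matrix.det_nonsing_inv, Ring.inverse_eq_inv']
    rw [hN, Matrix.det_mul, Matrix.det_mul, h4]
    rw [div_eq_mul_inv, ← hdetLL]; ring
  have hlog : Real.log (A.det / S0.det) = -∑ i, Real.log (μ i) := by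
    have h1 : ∑ i, Real.log (μ i) = Real.log N.det := by
      rw [← Real.log_prod (fun i _ => (hμpos i).ne')]
      congr 1
      rw [hNh.det_eq_prod_eigenvalues]
      simp [hμ]
    rw [h1, hdetN, Real.log_div hdet0.ne' hdetA.ne', Real.log_div hdetA.ne' hdet0.ne']
    ring
  -- trace term
  have htr1 : ((A⁻¹ - S0⁻¹) * S0).trace = N.trace - p := by
    rw [Matrix.sub_mul, Matrix.trace_sub, Matrix.nonsing_inv_mul _ (isUnit_iff_ne_zero.mpr hdet0.ne'),
      Matrix.trace_one, htrN]
    simp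
  -- LHS as eigenvalue sum
  have hLHS : -(1/2) * ((A⁻¹ - S0⁻¹) * S0).trace - (1/2) * Real.log (A.det / S0.det)
      = -(1/2) * ∑ i, (μ i - 1 - Real.log (μ i)) := by
    rw [htr1, hlog, htrsum]
    rw [Finset.sum_sub_distrib, Finset.sum_sub_distrib]
    simp [Finset.card_univ]
    ring
  -- quantitative lower bound on the sum
  have hsum : (∑ i, (μ i - 1)^2) / (Real.sqrt M + 1)^2
      ≤ ∑ i, (μ i - 1 - Real.log (μ i)) := by
    rw [Finset.sum_div]
    apply Finset.sum_le_sum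
    intro i _
    exact key_scalar (hμpos i) (hμM i)
  -- Σ (μ-1)² = frobSq (N - 1)
  have hfrobN : frobSq (N - 1) = ∑ i, (μ i - 1)^2 := by
    have h1 : (N - 1).IsHermitian := hNh.sub Matrix.isHermitian_one
    have h2 : frobSq (N - 1) = ((N - 1) * (N - 1)).trace := frobSq_eq_trace h1
    have h3 : (N - 1) * (N - 1) = N * N - N - N + 1 := by noncomm_ring
    have hexp : ∑ i, (μ i - 1)^2 = (∑ i, (μ i)^2) - 2 * (∑ i, μ i) + p := by
      have : ∀ i ∈ Finset.univ, (μ i - 1)^2 = (μ i)^2 - 2 * μ i + 1 := fun i _ => by ring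
      rw [Finset.sum_congr rfl this, Finset.sum_add_distrib, Finset.sum_sub_distrib,
        ← Finset.mul_sum]
      simp [Finset.card_univ]
    rw [h2, h3]
    rw [Matrix.trace_add, Matrix.trace_sub, Matrix.trace_sub, Matrix.trace_one,
      trace_sq_eq_sum_eigen_sq hNh, htrsum, hexp]
    simp only [Finset.card_univ, Fintype.card_fin, ← hμ]
    ring
  -- matrix identity and frobenius chain
  have hCC' : frobSq A ≤ C' := by
    have : C ≤ C' := by rw [hC']; have := le_max_left C 0; linarith
    linarith
  have h5 : A * A⁻¹ = 1 := Matrix.mul_nonsing_inv _ (isUnit_iff_ne_zero.mpr hdetA.ne')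
  have h6 : L⁻¹ * L = 1 := Matrix.nonsing_inv_mul _ hdetL
  have hid : A * L⁻¹ * (N - 1) * L = S0 - A := by
    calc A * L⁻¹ * (N - 1) * L
        = A * (L⁻¹ * L) * A⁻¹ * (L * L) - A * (L⁻¹ * L) := by rw [hN]; noncomm_ring
      _ = S0 - A := by
          rw [h6, hL2]
          simp only [mul_one]
          rw [h5, one_mul]
  have hchain : frobSq (A - S0) ≤ (C' * K) * frobSq (N - 1) := by
    have e1 : A - S0 = -(A * L⁻¹ * (N - 1) * L) := by rw [hid, neg_sub]
    rw [e1, frobSq_neg]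
    have n1 := frobSq_nonneg (N - 1)
    have n2 := frobSq_nonneg L
    have n3 := frobSq_nonneg L⁻¹
    have n4 := frobSq_nonneg A
    have n5 := frobSq_nonneg (A * L⁻¹)
    have n6 := frobSq_nonneg (A * L⁻¹ * (N - 1))
    have c1 := frobSq_mul_le (A * L⁻¹ * (N - 1)) L
    have c2 := frobSq_mul_le (A * L⁻¹) (N - 1)
    have c3 := frobSq_mul_le A L⁻¹
    have hKK : frobSq L⁻¹ * frobSq L ≤ K := by rw [hK]; linarith
    calc frobSq (A * L⁻¹ * (N - 1) * L)
        ≤ frobSq (A * L⁻¹ * (N - 1)) * frobSq L := c1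
      _ ≤ (frobSq (A * L⁻¹) * frobSq (N - 1)) * frobSq L :=
          mul_le_mul_of_nonneg_right c2 n2
      _ ≤ ((frobSq A * frobSq L⁻¹) * frobSq (N - 1)) * frobSq L :=
          mul_le_mul_of_nonneg_right (mul_le_mul_of_nonneg_right c3 n1) n2
      _ = (frobSq A * (frobSq L⁻¹ * frobSq L)) * frobSq (N - 1) := by ring
      _ ≤ (C' * K) * frobSq (N - 1) := by
          apply mul_le_mul_of_nonneg_right _ n1
          exact mul_le_mul hCC' hKK (mul_nonneg n3 n2) hC'pos.le
  have hdiv : frobSq (A - S0) / (C' * K) ≤ frobSq (N - 1) := by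
    rw [div_le_iff₀ (by positivity)]
    linarith [hchain]
  have final : frobSq (A - S0) / (C' * K) / (Real.sqrt M + 1)^2
      ≤ ∑ i, (μ i - 1 - Real.log (μ i)) := by
    calc frobSq (A - S0) / (C' * K) / (Real.sqrt M + 1)^2
        ≤ frobSq (N - 1) / (Real.sqrt M + 1)^2 := by
          apply div_le_div_of_nonneg_right hdiv hsM.le
      _ = (∑ i, (μ i - 1)^2) / (Real.sqrt M + 1)^2 := by rw [hfrobN]
      _ ≤ _ := hsum
  have heq : -c * frobSq (A - S0)
      = -(1/2) * (frobSq (A - S0) / (C' * K) / (Real.sqrt M + 1)^2) := by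
    rw [hc]; field_simp
  rw [hLHS, heq]
  linarith [final]
lemma exists_antilip {E F : Type*} [NormedAddCommGroup E] [NormedSpace ℝ E]
    [FiniteDimensional ℝ E] [NormedAddCommGroup F] [NormedSpace ℝ F] [Nontrivial E]
    (T : E →L[ℝ] F) (hT : ∀ v, T v = 0 → v = 0) :
    ∃ σ > (0:ℝ), ∀ v, σ * ‖v‖ ≤ ‖T v‖ := by
  have hcs : IsCompact (Metric.sphere (0:E) 1) := isCompact_sphere 0 1
  have hne : (Metric.sphere (0:E) 1).Nonempty := NormedSpace.sphere_nonempty.mpr zero_le_one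
  obtain ⟨v0, hv0mem, hv0min⟩ := hcs.exists_isMinOn hne (T.continuous.norm.continuousOn)
  have hv0norm : ‖v0‖ = 1 := by simpa using hv0mem
  have hv0ne : v0 ≠ 0 := by intro h; rw [h] at hv0norm; simp at hv0norm
  have hσpos : 0 < ‖T v0‖ := by
    rw [norm_pos_iff]
    intro h
    exact hv0ne (hT v0 h)
  refine ⟨‖T v0‖, hσpos, fun v => ?_⟩
  rcases eq_or_ne v 0 with rfl | hv
  · simp
  · have hnv : (0:ℝ) < ‖v‖ := norm_pos_iff.mpr hv
    have hmem : (‖v‖⁻¹ • v) ∈ Metric.sphere (0:E) 1 := by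
      simp [norm_smul, abs_of_nonneg (inv_nonneg.mpr hnv.le), inv_mul_cancel₀ hnv.ne']
    have := isMinOn_iff.mp hv0min _ hmem
    rw [_root_.map_smul, norm_smul] at this
    simp only [norm_inv, norm_norm] at this
    rw [mul_comm]
    calc ‖v‖ * ‖T v0‖ ≤ ‖v‖ * (‖v‖⁻¹ * ‖T v‖) := by
          apply mul_le_mul_of_nonneg_left this hnv.le
      _ = ‖T v‖ := by field_simp
set_option maxHeartbeats 1000000 in
lemma stepB {p q : ℕ} (hq : 1 ≤ q)
    (Θ : Set (EuclideanSpace ℝ (Fin q)))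
    (hΘbdd : Bornology.IsBounded Θ)
    (θ0 : EuclideanSpace ℝ (Fin q)) (hθ0 : θ0 ∈ Θ)
    (S : EuclideanSpace ℝ (Fin q) → Matrix (Fin p) (Fin p) ℝ)
    (hSsmooth : ∀ i j, ContDiff ℝ 2 (fun θ => S θ i j))
    (hinj : Function.Injective (fun v : EuclideanSpace ℝ (Fin q) =>
      Matrix.of (fun i j : Fin p => fderiv ℝ (fun θ => S θ i j) θ0 v)))
    (hident : ∀ θ ∈ closure Θ, S θ = S θ0 → θ = θ0) :
    ∃ c > (0:ℝ), ∀ θ ∈ closure Θ, c * ‖θ - θ0‖^2 ≤ frobSq (S θ - S θ0) := by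
  classical
  haveI : Nonempty (Fin q) := ⟨⟨0, hq⟩⟩
  set e : ((Fin p × Fin p) → ℝ) ≃L[ℝ] EuclideanSpace ℝ (Fin p × Fin p) := (EuclideanSpace.equiv (Fin p × Fin p) ℝ).symm
    with he
  set g : EuclideanSpace ℝ (Fin q) → ((Fin p × Fin p) → ℝ) := fun θ ij => S θ ij.1 ij.2 with hg
  set G : EuclideanSpace ℝ (Fin q) → EuclideanSpace ℝ (Fin p × Fin p) := fun θ => e (g θ) with hG
  have hdiffcomp : ∀ ij : Fin p × Fin p, DifferentiableAt ℝ (fun θ => S θ ij.1 ij.2) θ0 :=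
    fun ij => ((hSsmooth ij.1 ij.2).differentiable (by norm_num)).differentiableAt
  set D : EuclideanSpace ℝ (Fin q) →L[ℝ] ((Fin p × Fin p) → ℝ) :=
    ContinuousLinearMap.pi (fun ij => fderiv ℝ (fun θ => S θ ij.1 ij.2) θ0) with hD
  have hgD : HasFDerivAt g D θ0 := by
    rw [hg, hD]
    exact hasFDerivAt_pi.mpr (fun ij => (hdiffcomp ij).hasFDerivAt)
  set T : EuclideanSpace ℝ (Fin q) →L[ℝ] EuclideanSpace ℝ (Fin p × Fin p) := (e : ((Fin p × Fin p) → ℝ) →L[ℝ] EuclideanSpace ℝ (Fin p × Fin p)).comp D with hT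
  have hGT : HasFDerivAt G T θ0 := by
    rw [hG, hT]
    exact e.comp_hasFDerivAt_iff.mpr hgD
  -- components of T
  have hTapp : ∀ v ij, (T v) ij = fderiv ℝ (fun θ => S θ ij.1 ij.2) θ0 v := by
    intro v ij
    rw [hT]
    rfl
  -- injectivity of T
  have hTinj : ∀ v, T v = 0 → v = 0 := by
    intro v hv
    have h0 : (fun v : EuclideanSpace ℝ (Fin q) => Matrix.of (fun i j : Fin p => fderiv ℝ (fun θ => S θ i j) θ0 v)) v
        = (fun v : EuclideanSpace ℝ (Fin q) => Matrix.of (fun i j : Fin p => fderiv ℝ (fun θ => S θ i j) θ0 v)) 0 := by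
      simp only
      ext i j
      simp only [Matrix.of_apply]
      have h1 : (T v) (i, j) = 0 := by rw [hv]; rfl
      rw [hTapp v (i, j)] at h1
      simp [h1]
    exact hinj h0
  obtain ⟨σ, hσpos, hσ⟩ := exists_antilip T hTinj
  -- frobSq = squared Euclidean distance of G
  have hfrobG : ∀ θ, frobSq (S θ - S θ0) = ‖G θ - G θ0‖^2 := by
    intro θ
    have h1 : ‖G θ - G θ0‖^2 = ∑ ij : Fin p × Fin p, ((G θ - G θ0) ij)^2 := by
      rw [EuclideanSpace.norm_eq, Real.sq_sqrt]
      · apply Finset.sum_congr rfl; intro ij _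
        rw [Real.norm_eq_abs, sq_abs]
      · positivity
    rw [h1, frobSq, Fintype.sum_prod_type]
    apply Finset.sum_congr rfl; intro i _
    apply Finset.sum_congr rfl; intro j _
    have : (G θ - G θ0) (i, j) = S θ i j - S θ0 i j := rfl
    rw [this]
    rfl
  -- local bound
  have hlittle := hGT.isLittleO
  have hev := hlittle.def (show (0:ℝ) < σ/2 by linarith)
  rw [Metric.eventually_nhds_iff] at hev
  obtain ⟨δ, hδpos, hδ⟩ := hev
  have hlocal : ∀ θ : EuclideanSpace ℝ (Fin q), dist θ θ0 < δ → (σ/2)^2 * ‖θ - θ0‖^2 ≤ frobSq (S θ - S θ0) := by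
    intro θ hθ
    have h2 := hδ hθ
    have h3 : σ * ‖θ - θ0‖ ≤ ‖T (θ - θ0)‖ := hσ _
    have h4 : ‖G θ - G θ0‖ ≥ σ/2 * ‖θ - θ0‖ := by
      have h5 : ‖T (θ - θ0)‖ ≤ ‖G θ - G θ0‖ + ‖G θ - G θ0 - T (θ - θ0)‖ := by
        have h6 := norm_sub_le (G θ - G θ0) (G θ - G θ0 - T (θ - θ0))
        simpa [sub_sub_cancel] using h6
      linarith
    rw [hfrobG]
    have h6 : 0 ≤ σ/2 * ‖θ - θ0‖ := by positivity
    calc (σ/2)^2 * ‖θ - θ0‖^2 = (σ/2 * ‖θ - θ0‖)^2 := by ring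
      _ ≤ ‖G θ - G θ0‖^2 := pow_le_pow_left₀ h6 h4 2
  -- global bound on the complement of the ball
  have hcompact : IsCompact (closure Θ) :=
    Metric.isCompact_of_isClosed_isBounded isClosed_closure hΘbdd.closure
  -- bound on ‖θ - θ0‖² over closure Θ
  obtain ⟨R, hRpos, hR⟩ : ∃ R > (0:ℝ), ∀ θ ∈ closure Θ, ‖θ - θ0‖^2 ≤ R := by
    obtain ⟨R0, hR0⟩ := hcompact.isBounded.subset_ball θ0
    refine ⟨max R0 1 ^ 2, by positivity, fun θ hθ => ?_⟩
    have := hR0 hθ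
    rw [Metric.mem_ball, dist_eq_norm] at this
    have h7 : ‖θ - θ0‖ ≤ max R0 1 := le_trans this.le (le_max_left _ _)
    nlinarith [norm_nonneg (θ - θ0)]
  set Kset : Set (EuclideanSpace ℝ (Fin q)) := closure Θ ∩ {θ | δ ≤ dist θ θ0} with hKset
  have hfrobcont : Continuous fun θ : EuclideanSpace ℝ (Fin q) => frobSq (S θ - S θ0) := by
    apply continuous_finset_sum; intro i _
    apply continuous_finset_sum; intro j _
    have : Continuous fun θ => S θ i j - S θ0 i j :=
      ((hSsmooth i j).continuous).sub continuous_const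
    exact this.pow 2
  by_cases hKne : Kset.Nonempty
  · -- minimum on Kset
    have hKclosed : IsClosed Kset := by
      apply isClosed_closure.inter
      exact isClosed_le continuous_const (continuous_id.dist continuous_const)
    have hKcompact : IsCompact Kset :=
      hcompact.of_isClosed_subset hKclosed Set.inter_subset_left
    obtain ⟨θm, hθmmem, hθmmin⟩ := hKcompact.exists_isMinOn hKne hfrobcont.continuousOn
    have hmpos : 0 < frobSq (S θm - S θ0) := by
      rcases (frobSq_nonneg (S θm - S θ0)).lt_or_eq with h | h
      · exact h
      · exfalso
        have hSeq : S θm = S θ0 := by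
          ext i j
          have hz : ∀ i j, (S θm i j - S θ0 i j)^2 = 0 := by
            intro i j
            have hsum : ∑ i, ∑ j, (S θm i j - S θ0 i j)^2 = 0 := h.symm
            have h8 : ∀ i ∈ Finset.univ, (0:ℝ) ≤ ∑ j, ((S θm - S θ0) i j)^2 :=
              fun i _ => Finset.sum_nonneg fun j _ => sq_nonneg _
            have h9 := (Finset.sum_eq_zero_iff_of_nonneg h8).mp hsum i (Finset.mem_univ i)
            have h10 := (Finset.sum_eq_zero_iff_of_nonneg
              (fun j _ => sq_nonneg ((S θm - S θ0) i j))).mp h9 j (Finset.mem_univ j)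
            simpa using h10
          have := hz i j
          have := sq_eq_zero_iff.mp this
          linarith
        have hθm0 : θm = θ0 := hident θm hθmmem.1 hSeq
        have : δ ≤ dist θm θ0 := hθmmem.2
        rw [hθm0, dist_self] at this
        linarith
    refine ⟨min ((σ/2)^2) (frobSq (S θm - S θ0) / R), ?_, ?_⟩
    · exact lt_min (by positivity) (div_pos hmpos hRpos)
    · intro θ hθ
      by_cases hcase : dist θ θ0 < δ
      · calc min ((σ/2)^2) (frobSq (S θm - S θ0) / R) * ‖θ - θ0‖^2
            ≤ (σ/2)^2 * ‖θ - θ0‖^2 := by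
              apply mul_le_mul_of_nonneg_right (min_le_left _ _) (by positivity)
          _ ≤ frobSq (S θ - S θ0) := hlocal θ hcase
      · have hmemK : θ ∈ Kset := ⟨hθ, not_lt.mp hcase⟩
        have hmin := isMinOn_iff.mp hθmmin θ hmemK
        calc min ((σ/2)^2) (frobSq (S θm - S θ0) / R) * ‖θ - θ0‖^2
            ≤ (frobSq (S θm - S θ0) / R) * ‖θ - θ0‖^2 := by
              apply mul_le_mul_of_nonneg_right (min_le_right _ _) (by positivity)
          _ ≤ (frobSq (S θm - S θ0) / R) * R := by
              exact mul_le_mul_of_nonneg_left (hR θ hθ) (div_nonneg (frobSq_nonneg _) hRpos.le)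
          _ = frobSq (S θm - S θ0) := div_mul_cancel₀ _ hRpos.ne'
          _ ≤ frobSq (S θ - S θ0) := hmin
  · -- all of closure Θ is within the ball
    refine ⟨(σ/2)^2, by positivity, fun θ hθ => ?_⟩
    have : dist θ θ0 < δ := by
      by_contra h
      exact hKne ⟨θ, hθ, not_lt.mp h⟩
    exact hlocal θ this

end S10

/-- Remark after [C1]: if the derivative of `Σ` at `θ₀` is injective and `Σ` is
identifiable at `θ₀` on `cl Θ`, then there is `χ > 0` with
`Y(θ) ≤ -χ |θ - θ₀|²` on `cl Θ`. -/
theorem stmt10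
    (p q : ℕ) (hp : 1 ≤ p) (hq : 1 ≤ q)
    (Θ : Set (EuclideanSpace ℝ (Fin q)))
    (hΘne : Θ.Nonempty) (hΘbdd : Bornology.IsBounded Θ) (hΘopen : IsOpen Θ)
    (hΘconv : Convex ℝ Θ)
    (θ0 : EuclideanSpace ℝ (Fin q)) (hθ0 : θ0 ∈ Θ)
    (S : EuclideanSpace ℝ (Fin q) → Matrix (Fin p) (Fin p) ℝ)
    (hSsymm : ∀ θ, (S θ).IsSymm)
    (hSsmooth : ∀ i j, ContDiff ℝ 2 (fun θ => S θ i j))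
    (hSpos : ∀ θ ∈ closure Θ, (S θ).PosDef)
    (hinj : Function.Injective (fun v : EuclideanSpace ℝ (Fin q) =>
      Matrix.of (fun i j : Fin p => fderiv ℝ (fun θ => S θ i j) θ0 v)))
    (hident : ∀ θ ∈ closure Θ, S θ = S θ0 → θ = θ0) :
    ∃ χ > (0 : ℝ), ∀ θ ∈ closure Θ,
      -(1 / 2) * (((S θ)⁻¹ - (S θ0)⁻¹) * S θ0).trace
          - (1 / 2) * Real.log ((S θ).det / (S θ0).det)
        ≤ -χ * ‖θ - θ0‖ ^ 2 := by
  classical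
  have hθ0cl : θ0 ∈ closure Θ := subset_closure hθ0
  have hclne : (closure Θ).Nonempty := ⟨θ0, hθ0cl⟩
  have hcompact : IsCompact (closure Θ) :=
    Metric.isCompact_of_isClosed_isBounded isClosed_closure hΘbdd.closure
  -- continuity of θ ↦ tr((S θ)⁻¹ * S θ0) on closure Θ
  have hScont : Continuous S := continuous_matrix (fun i j => (hSsmooth i j).continuous)
  have hdetcont : Continuous fun θ => (S θ).det := hScont.matrix_det
  have hadjcont : Continuous fun θ => (S θ).adjugate := hScont.matrix_adjugate
  have hinvcont : ContinuousOn (fun θ => (S θ)⁻¹) (closure Θ) := by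
    have heq : (fun θ => (S θ)⁻¹) = fun θ => ((S θ).det)⁻¹ • (S θ).adjugate := by
      funext θ
      rw [Matrix.inv_def, Ring.inverse_eq_inv']
    rw [heq]
    exact (hdetcont.continuousOn.inv₀ fun θ hθ => (hSpos θ hθ).det_pos.ne').smul
      hadjcont.continuousOn
  have htrcont : ContinuousOn (fun θ => (((S θ)⁻¹) * S θ0).trace) (closure Θ) := by
    have h1 : Continuous fun M : Matrix (Fin p) (Fin p) ℝ => (M * S θ0).trace :=
      (continuous_id.matrix_mul continuous_const).matrix_trace
    exact h1.comp_continuousOn hinvcont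
  obtain ⟨θM, hθMmem, hθMmax⟩ := hcompact.exists_isMaxOn hclne htrcont
  set M : ℝ := (((S θM)⁻¹) * S θ0).trace with hM
  have hMbound : ∀ θ ∈ closure Θ, (((S θ)⁻¹) * S θ0).trace ≤ M :=
    fun θ hθ => isMaxOn_iff.mp hθMmax θ hθ
  -- bound on frobSq (S θ)
  have hfrobcont : Continuous fun θ => S10.frobSq (S θ) := by
    apply continuous_finset_sum; intro i _
    apply continuous_finset_sum; intro j _
    exact ((hSsmooth i j).continuous).pow 2
  obtain ⟨θC, hθCmem, hθCmax⟩ := hcompact.exists_isMaxOn hclne hfrobcont.continuousOn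
  set C : ℝ := S10.frobSq (S θC) with hC
  have hCbound : ∀ θ ∈ closure Θ, S10.frobSq (S θ) ≤ C :=
    fun θ hθ => isMaxOn_iff.mp hθCmax θ hθ
  -- step A and step B
  obtain ⟨c, hcpos, hcA⟩ := S10.stepA (S θ0) (hSpos θ0 hθ0cl) M C
  obtain ⟨c2, hc2pos, hc2⟩ := S10.stepB hq Θ hΘbdd θ0 hθ0 S hSsmooth hinj hident
  refine ⟨c * c2, mul_pos hcpos hc2pos, fun θ hθ => ?_⟩
  have h1 := hcA (S θ) (hSpos θ hθ) (hMbound θ hθ) (hCbound θ hθ)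
  have h2 := hc2 θ hθ
  have h3 : c * (c2 * ‖θ - θ0‖^2) ≤ c * S10.frobSq (S θ - S θ0) :=
    mul_le_mul_of_nonneg_left h2 hcpos.le
  calc -(1 / 2) * (((S θ)⁻¹ - (S θ0)⁻¹) * S θ0).trace
          - (1 / 2) * Real.log ((S θ).det / (S θ0).det)
      ≤ -c * S10.frobSq (S θ - S θ0) := h1
    _ ≤ -(c * c2) * ‖θ - θ0‖ ^ 2 := by linarith

end
end

section
/- Assume sup_{theta in cl(Theta*)} |(1/n) H*_n(theta) - K*(theta)| -> 0 in probability, sup_{theta in cl(Theta)} |(1/n) H_n(theta) - K(theta)| -> 0 in probability, and sup_{theta in cl(Theta)} K(theta) < sup_{theta in cl(Theta*)} K*(theta). Then P( -2 H*_n(hat_theta*_n) + q* log n < -2 H_n(hat_theta_n) + q log n ) -> 1 as n -> infinity. -/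
open MeasureTheory Filter Matrix

noncomputable section

private lemma real_biSup_le {E : Type*} {s : Set E} {f : E → ℝ} {M : ℝ}
    (hM0 : 0 ≤ M) (hM : ∀ x ∈ s, f x ≤ M) : (⨆ x ∈ s, f x) ≤ M :=
  Real.iSup_le (fun x => Real.iSup_le (fun hx => hM x hx) hM0) hM0

private lemma real_le_biSup {E : Type*} {s : Set E} {f : E → ℝ} {M : ℝ}
    (hM : ∀ x ∈ s, f x ≤ M) {θ : E} (hθ : θ ∈ s) : f θ ≤ ⨆ x ∈ s, f x := by
  have hbdd : BddAbove (Set.range fun x => ⨆ _ : x ∈ s, f x) := by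
    refine ⟨max M 0, ?_⟩
    rintro y ⟨x, rfl⟩
    exact Real.iSup_le (fun hx => le_max_of_le_left (hM x hx)) (le_max_right _ _)
  calc f θ = ⨆ _ : θ ∈ s, f θ := (ciSup_pos (f := fun _ => f θ) hθ).symm
    _ ≤ ⨆ x ∈ s, f x := le_ciSup hbdd θ

private lemma real_biSup_nonneg {E : Type*} {s : Set E} {f : E → ℝ}
    (hx : ∃ x, x ∉ s) : 0 ≤ ⨆ x ∈ s, f x := by
  obtain ⟨x, hx⟩ := hx
  refine Real.iSup_nonneg' ⟨x, ?_⟩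
  haveI : IsEmpty (x ∈ s) := ⟨hx⟩
  rw [Real.iSup_of_isEmpty]

/-- Theorem 3.2 (no asymptotic selection of misspecified models): if the correctly
specified model has a strictly larger limiting criterion value, then
`P(QBIC*ₙ < QBICₙ) → 1`. -/
theorem stmt14
    {Ω : Type*} [MeasurableSpace Ω] (P : Measure Ω) [IsProbabilityMeasure P]
    (q qs : ℕ) (hq : 1 ≤ q) (hqs : 1 ≤ qs)
    (Θ : Set (EuclideanSpace ℝ (Fin q))) (Θs : Set (EuclideanSpace ℝ (Fin qs)))
    (hΘne : Θ.Nonempty) (hΘbdd : Bornology.IsBounded Θ) (hΘopen : IsOpen Θ)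
    (hΘsne : Θs.Nonempty) (hΘsbdd : Bornology.IsBounded Θs) (hΘsopen : IsOpen Θs)
    (H : ℕ → Ω → EuclideanSpace ℝ (Fin q) → ℝ)
    (Hs : ℕ → Ω → EuclideanSpace ℝ (Fin qs) → ℝ)
    (hHmeas : ∀ n, Measurable (fun pr : Ω × EuclideanSpace ℝ (Fin q) => H n pr.1 pr.2))
    (hHsmeas : ∀ n, Measurable (fun pr : Ω × EuclideanSpace ℝ (Fin qs) => Hs n pr.1 pr.2))
    (hHcont : ∀ n ω, Continuous (H n ω))
    (hHscont : ∀ n ω, Continuous (Hs n ω))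
    (θhat : ℕ → Ω → EuclideanSpace ℝ (Fin q))
    (hθhatmeas : ∀ n, Measurable (θhat n))
    (hθhatmem : ∀ n ω, θhat n ω ∈ closure Θ)
    (hθhatmax : ∀ n ω, ∀ θ ∈ closure Θ, H n ω θ ≤ H n ω (θhat n ω))
    (θhats : ℕ → Ω → EuclideanSpace ℝ (Fin qs))
    (hθhatsmeas : ∀ n, Measurable (θhats n))
    (hθhatsmem : ∀ n ω, θhats n ω ∈ closure Θs)
    (hθhatsmax : ∀ n ω, ∀ θ ∈ closure Θs, Hs n ω θ ≤ Hs n ω (θhats n ω))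
    (K : EuclideanSpace ℝ (Fin q) → ℝ) (Ks : EuclideanSpace ℝ (Fin qs) → ℝ)
    (hKcont : ContinuousOn K (closure Θ)) (hKscont : ContinuousOn Ks (closure Θs))
    -- uniform convergence in probability of (1/n) H*ₙ to K*
    (h1 : ∀ ε > 0, Tendsto (fun n : ℕ =>
      P {ω | ε < ⨆ θ ∈ closure Θs, |(1 / (n : ℝ)) * Hs n ω θ - Ks θ|}) atTop (nhds 0))
    -- uniform convergence in probability of (1/n) Hₙ to K
    (h2 : ∀ ε > 0, Tendsto (fun n : ℕ =>
      P {ω | ε < ⨆ θ ∈ closure Θ, |(1 / (n : ℝ)) * H n ω θ - K θ|}) atTop (nhds 0))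
    -- sup K < sup K*
    (h3 : (⨆ θ ∈ closure Θ, K θ) < ⨆ θ ∈ closure Θs, Ks θ) :
    Tendsto (fun n : ℕ => P {ω |
        -2 * Hs n ω (θhats n ω) + (qs : ℝ) * Real.log n
          < -2 * H n ω (θhat n ω) + (q : ℝ) * Real.log n})
      atTop (nhds 1) := by
  -- compactness and maxima
  haveI : Nonempty (Fin q) := ⟨⟨0, hq⟩⟩
  haveI : Nonempty (Fin qs) := ⟨⟨0, hqs⟩⟩
  have hcΘ : IsCompact (closure Θ) := hΘbdd.isCompact_closure
  have hcΘs : IsCompact (closure Θs) := hΘsbdd.isCompact_closure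
  have hneΘ : (closure Θ).Nonempty := hΘne.mono subset_closure
  have hneΘs : (closure Θs).Nonempty := hΘsne.mono subset_closure
  obtain ⟨θ₀, hθ₀mem, hθ₀max⟩ := hcΘs.exists_isMaxOn hneΘs hKscont
  obtain ⟨θ₁, hθ₁mem, hθ₁max⟩ := hcΘ.exists_isMaxOn hneΘ hKcont
  -- there exist points outside the closures
  have hout : ∀ {m : ℕ} (s : Set (EuclideanSpace ℝ (Fin m))), Nonempty (Fin m) →
      Bornology.IsBounded s → ∃ x, x ∉ closure s := by
    intro m s hm hb
    haveI := hm
    obtain ⟨r, hr⟩ := hb.closure.subset_ball 0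
    obtain ⟨x, hx⟩ := NormedSpace.exists_lt_norm ℝ (EuclideanSpace ℝ (Fin m)) r
    refine ⟨x, fun hmem => ?_⟩
    have := hr hmem
    rw [Metric.mem_ball, dist_zero_right] at this
    linarith
  set A := ⨆ θ ∈ closure Θ, K θ with hA
  set B := ⨆ θ ∈ closure Θs, Ks θ with hB
  have hA0 : 0 ≤ A := real_biSup_nonneg (hout Θ ‹_› hΘbdd)
  have hKleA : ∀ θ ∈ closure Θ, K θ ≤ A :=
    fun θ hθ => real_le_biSup (fun x hx => hθ₁max hx) hθ
  have hBle : B ≤ max (Ks θ₀) 0 :=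
    real_biSup_le (le_max_right _ _) (fun x hx => le_max_of_le_left (hθ₀max hx))
  have hb_gt_A : A < Ks θ₀ := by
    rcases le_total (Ks θ₀) 0 with h | h
    · have : B ≤ 0 := hBle.trans (by simpa using h)
      linarith [h3]
    · have : B ≤ Ks θ₀ := hBle.trans (by simpa using h)
      linarith [h3]
  set δ : ℝ := Ks θ₀ - A with hδdef
  have hδ : 0 < δ := by simp only [hδdef]; linarith
  set ε : ℝ := δ / 4 with hεdef
  have hε : 0 < ε := by positivity
  -- the events
  set E : ℕ → Set Ω := fun n => {ω |
        -2 * Hs n ω (θhats n ω) + (qs : ℝ) * Real.log n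
          < -2 * H n ω (θhat n ω) + (q : ℝ) * Real.log n} with hE
  set Av : ℕ → Set Ω := fun n =>
    {ω | ε < ⨆ θ ∈ closure Θs, |(1 / (n : ℝ)) * Hs n ω θ - Ks θ|} with hAv
  set Bv : ℕ → Set Ω := fun n =>
    {ω | ε < ⨆ θ ∈ closure Θ, |(1 / (n : ℝ)) * H n ω θ - K θ|} with hBv
  have hmE : ∀ n, MeasurableSet (E n) := by
    intro n
    have m1 : Measurable fun ω => Hs n ω (θhats n ω) :=
      (hHsmeas n).comp (measurable_id.prodMk (hθhatsmeas n))
    have m2 : Measurable fun ω => H n ω (θhat n ω) :=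
      (hHmeas n).comp (measurable_id.prodMk (hθhatmeas n))
    exact measurableSet_lt ((m1.const_mul (-2)).add_const _)
      ((m2.const_mul (-2)).add_const _)
  -- eventually, outside Av ∪ Bv the event holds
  have hlog : ∀ᶠ n : ℕ in atTop, (qs : ℝ) * Real.log n < (n : ℝ) * δ := by
    have hqs0 : (0:ℝ) < qs := by exact_mod_cast hqs
    have hc : (0:ℝ) < δ / (2 * qs) := by positivity
    have hlit : ∀ᶠ x : ℝ in atTop, ‖Real.log x‖ ≤ (δ / (2 * qs)) * ‖id x‖ :=
      Real.isLittleO_log_id_atTop.def hc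
    filter_upwards [tendsto_natCast_atTop_atTop.eventually hlit, eventually_ge_atTop 1]
      with n hn hn1
    have hn0 : (0:ℝ) < n := by exact_mod_cast hn1
    have hlogpos : 0 ≤ Real.log n := Real.log_nonneg (by exact_mod_cast hn1)
    simp only [id_eq, Real.norm_eq_abs, abs_of_nonneg hlogpos, abs_of_nonneg hn0.le] at hn
    have h2 : (qs:ℝ) * ((δ/(2*qs)) * n) = δ/2 * n := by field_simp
    nlinarith [mul_le_mul_of_nonneg_left hn hqs0.le]
  have hKey : ∀ᶠ n : ℕ in atTop, ∀ ω, ω ∉ Av n → ω ∉ Bv n → ω ∈ E n := by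
    filter_upwards [hlog, eventually_ge_atTop 1] with n hlogn hn1 ω hav hbv
    have hn0 : (0:ℝ) < n := by exact_mod_cast hn1
    have hlogn0 : 0 ≤ Real.log n := Real.log_natCast_nonneg n
    -- bounds from uniform closeness
    have havle : (⨆ θ ∈ closure Θs, |(1 / (n : ℝ)) * Hs n ω θ - Ks θ|) ≤ ε := le_of_not_gt hav
    have hbvle : (⨆ θ ∈ closure Θ, |(1 / (n : ℝ)) * H n ω θ - K θ|) ≤ ε := le_of_not_gt hbv
    obtain ⟨Ms, hMs⟩ := hcΘs.bddAbove_image (f := fun θ => |(1 / (n : ℝ)) * Hs n ω θ - Ks θ|)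
      (((continuous_const.mul (hHscont n ω)).continuousOn.sub hKscont).abs)
    obtain ⟨Mq, hMq⟩ := hcΘ.bddAbove_image (f := fun θ => |(1 / (n : ℝ)) * H n ω θ - K θ|)
      (((continuous_const.mul (hHcont n ω)).continuousOn.sub hKcont).abs)
    have key1 : |(1 / (n : ℝ)) * Hs n ω θ₀ - Ks θ₀| ≤ ε :=
      (real_le_biSup (fun x hx => hMs (Set.mem_image_of_mem _ hx)) hθ₀mem).trans havle
    have key2 : |(1 / (n : ℝ)) * H n ω (θhat n ω) - K (θhat n ω)| ≤ ε :=
      (real_le_biSup (fun x hx => hMq (Set.mem_image_of_mem _ hx)) (hθhatmem n ω)).trans hbvle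
    rw [abs_le] at key1 key2
    have hKhat : K (θhat n ω) ≤ A := hKleA _ (hθhatmem n ω)
    have hHs1 : (n : ℝ) * (Ks θ₀ - ε) ≤ Hs n ω θ₀ := by
      have h := key1.1
      calc (n : ℝ) * (Ks θ₀ - ε) ≤ (n : ℝ) * ((1 / (n:ℝ)) * Hs n ω θ₀) :=
            mul_le_mul_of_nonneg_left (by linarith) hn0.le
        _ = Hs n ω θ₀ := by field_simp
    have hHs2 : Hs n ω θ₀ ≤ Hs n ω (θhats n ω) := hθhatsmax n ω θ₀ hθ₀mem
    have hH1 : H n ω (θhat n ω) ≤ (n : ℝ) * (A + ε) := by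
      have h := key2.2
      calc H n ω (θhat n ω) = (n : ℝ) * ((1 / (n:ℝ)) * H n ω (θhat n ω)) := by field_simp
        _ ≤ (n : ℝ) * (A + ε) := mul_le_mul_of_nonneg_left (by linarith) hn0.le
    show -2 * Hs n ω (θhats n ω) + (qs : ℝ) * Real.log n
          < -2 * H n ω (θhat n ω) + (q : ℝ) * Real.log n
    have hq0 : (0:ℝ) ≤ (q:ℝ) * Real.log n := by positivity
    have goal1 : -2 * Hs n ω (θhats n ω) + (qs : ℝ) * Real.log n
        < -2*((n:ℝ)*(Ks θ₀ - ε)) + (n:ℝ)*δ := by linarith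
    have goal2 : (-2:ℝ)*((n:ℝ)*(Ks θ₀ - ε)) + (n:ℝ)*δ = -2*((n:ℝ)*(A+ε)) := by
      rw [hεdef, hδdef]; ring
    linarith
  -- probability estimates
  have hsub : ∀ᶠ n : ℕ in atTop, P (E n)ᶜ ≤ P (Av n) + P (Bv n) := by
    filter_upwards [hKey] with n h
    refine (measure_mono ?_).trans (measure_union_le _ _)
    intro ω hω
    by_cases h1 : ω ∈ Av n
    · exact Or.inl h1
    by_cases h2 : ω ∈ Bv n
    · exact Or.inr h2
    exact absurd (h ω h1 h2) hω
  have hsum : Tendsto (fun n => P (Av n) + P (Bv n)) atTop (nhds 0) := by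
    have := (h1 ε hε).add (h2 ε hε)
    simp only [hAv, hBv, one_div]
    simpa using this
  have hcompl : Tendsto (fun n => P (E n)ᶜ) atTop (nhds 0) :=
    tendsto_of_tendsto_of_tendsto_of_le_of_le' tendsto_const_nhds hsum
      (Eventually.of_forall fun n => zero_le) hsub
  have hone : Tendsto (fun n => 1 - P (E n)ᶜ) atTop (nhds 1) := by
    have hcont := (ENNReal.continuous_sub_left (a := 1) ENNReal.one_ne_top).tendsto 0
    have := hcont.comp hcompl
    simpa [Function.comp_def] using this
  refine hone.congr fun n => ?_
  rw [← prob_compl_eq_one_sub (hmE n).compl, compl_compl]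


end
end

section
/- For every Lebesgue-integrable function g : R^q -> [0, infinity), the random variables Integral_{hat_U_n intersect A_n} g(u) du converge in probability to Integral_{R^q} g(u) du as n -> infinity. -/
open MeasureTheory Filter Matrix

noncomputable section

/-- For every Lebesgue-integrable `g ≥ 0`, `∫_{Ûₙ ∩ Aₙ} g(u) du → ∫_{ℝ^q} g(u) du`
in probability. -/
theorem stmt17
    {Ω : Type*} [MeasurableSpace Ω] (P : Measure Ω) [IsProbabilityMeasure P]
    (q : ℕ) (hq : 1 ≤ q)
    (Θ : Set (EuclideanSpace ℝ (Fin q))) (hΘopen : IsOpen Θ)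
    (θ0 : EuclideanSpace ℝ (Fin q)) (hθ0 : θ0 ∈ Θ)
    (θhat : ℕ → Ω → EuclideanSpace ℝ (Fin q))
    (hθhatmeas : ∀ n, Measurable (θhat n))
    (h1 : ∀ ε > 0, Tendsto (fun n => P {ω | ε < ‖θhat n ω - θ0‖}) atTop (nhds 0))
    (g : EuclideanSpace ℝ (Fin q) → ℝ) (hgint : Integrable g) (hgnonneg : ∀ u, 0 ≤ g u) :
    TendstoInProb P (fun n ω =>
      ∫ u in {u : EuclideanSpace ℝ (Fin q) |
            θhat n ω + ((n : ℝ) ^ (-(1 : ℝ) / 2)) • u ∈ Θ} ∩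
          {u : EuclideanSpace ℝ (Fin q) | ‖u‖ ≤ (n : ℝ) ^ ((3 : ℝ) / 8)}, g u)
      (∫ u, g u) := by
  intro ε hε
  set c := ∫ u, g u with hc
  obtain ⟨r, hr, hball⟩ := Metric.isOpen_iff.mp hΘopen θ0 hθ0
  -- choose a ball capturing most of the mass
  have hmono : Monotone (fun n : ℕ => Metric.closedBall (0 : EuclideanSpace ℝ (Fin q)) n) :=
    fun a b hab => Metric.closedBall_subset_closedBall (by exact_mod_cast hab)
  have hunion : (⋃ n : ℕ, Metric.closedBall (0 : EuclideanSpace ℝ (Fin q)) n) = Set.univ := by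
    ext x
    simp only [Set.mem_iUnion, Set.mem_univ, iff_true, Metric.mem_closedBall, dist_zero_right]
    exact ⟨⌈‖x‖⌉₊, Nat.le_ceil _⟩
  have htt : Tendsto (fun n : ℕ => ∫ u in Metric.closedBall (0:EuclideanSpace ℝ (Fin q)) n, g u)
      atTop (nhds c) := by
    have := tendsto_setIntegral_of_monotone (f := g) (μ := volume)
      (fun n : ℕ => measurableSet_closedBall) hmono (by rw [hunion]; exact hgint.integrableOn)
    rw [hunion] at this
    simpa using this
  obtain ⟨R, hR⟩ := (htt.eventually (Metric.ball_mem_nhds c hε)).exists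
  rw [Real.dist_eq] at hR
  -- eventual conditions on n
  have h38 : Tendsto (fun n : ℕ => (n:ℝ) ^ ((3:ℝ)/8)) atTop atTop :=
    (tendsto_rpow_atTop (by norm_num)).comp tendsto_natCast_atTop_atTop
  have hm12 : Tendsto (fun n : ℕ => (n:ℝ) ^ (-(1:ℝ)/2) * R) atTop (nhds 0) := by
    have h0 : Tendsto (fun n : ℕ => (n:ℝ) ^ (-(1:ℝ)/2)) atTop (nhds 0) := by
      have := (tendsto_rpow_neg_atTop (y := (1:ℝ)/2) (by norm_num)).comp
        (tendsto_natCast_atTop_atTop (R := ℝ))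
      simpa [neg_div, Function.comp_def] using this
    simpa using h0.mul_const (R:ℝ)
  have F1 : ∀ᶠ n : ℕ in atTop, (R:ℝ) ≤ (n:ℝ) ^ ((3:ℝ)/8) := h38.eventually_ge_atTop R
  have F2 : ∀ᶠ n : ℕ in atTop, (n:ℝ) ^ (-(1:ℝ)/2) * R < r/4 :=
    hm12.eventually_lt_const (by positivity)
  -- the squeeze
  have key : ∀ᶠ n : ℕ in atTop,
      P {ω | ε < |(∫ u in {u : EuclideanSpace ℝ (Fin q) |
            θhat n ω + ((n : ℝ) ^ (-(1 : ℝ) / 2)) • u ∈ Θ} ∩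
          {u : EuclideanSpace ℝ (Fin q) | ‖u‖ ≤ (n : ℝ) ^ ((3 : ℝ) / 8)}, g u) - c|}
        ≤ P {ω | r/4 < ‖θhat n ω - θ0‖} := by
    filter_upwards [F1, F2] with n hn1 hn2
    apply measure_mono
    intro ω hω
    simp only [Set.mem_setOf_eq] at hω ⊢
    by_contra hclose
    push_neg at hclose
    set S : Set (EuclideanSpace ℝ (Fin q)) :=
      {u | θhat n ω + ((n : ℝ) ^ (-(1 : ℝ) / 2)) • u ∈ Θ} ∩
        {u | ‖u‖ ≤ (n : ℝ) ^ ((3 : ℝ) / 8)} with hS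
    have hsub : Metric.closedBall (0:EuclideanSpace ℝ (Fin q)) R ⊆ S := by
      intro u hu
      rw [Metric.mem_closedBall, dist_zero_right] at hu
      have hs : (0:ℝ) ≤ (n:ℝ) ^ (-(1:ℝ)/2) := Real.rpow_nonneg (Nat.cast_nonneg n) _
      constructor
      · apply hball
        rw [Metric.mem_ball]
        have : dist (θhat n ω + ((n : ℝ) ^ (-(1 : ℝ) / 2)) • u) θ0
            ≤ ‖θhat n ω - θ0‖ + (n:ℝ) ^ (-(1:ℝ)/2) * ‖u‖ := by
          rw [dist_eq_norm]
          calc ‖θhat n ω + ((n : ℝ) ^ (-(1 : ℝ) / 2)) • u - θ0‖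
              = ‖(θhat n ω - θ0) + ((n : ℝ) ^ (-(1 : ℝ) / 2)) • u‖ := by rw [add_sub_right_comm]
            _ ≤ ‖θhat n ω - θ0‖ + ‖((n : ℝ) ^ (-(1 : ℝ) / 2)) • u‖ := norm_add_le _ _
            _ = ‖θhat n ω - θ0‖ + (n:ℝ) ^ (-(1:ℝ)/2) * ‖u‖ := by
                rw [norm_smul, Real.norm_eq_abs, abs_of_nonneg hs]
        have h2 : (n:ℝ) ^ (-(1:ℝ)/2) * ‖u‖ ≤ (n:ℝ) ^ (-(1:ℝ)/2) * R :=
          mul_le_mul_of_nonneg_left hu hs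
        linarith
      · exact le_trans hu hn1
    have hint : ∫ u in S, g u ≤ c :=
      setIntegral_le_integral hgint (Filter.Eventually.of_forall hgnonneg)
    have hint2 : ∫ u in Metric.closedBall (0:EuclideanSpace ℝ (Fin q)) R, g u ≤ ∫ u in S, g u :=
      setIntegral_mono_set hgint.integrableOn
        (Filter.Eventually.of_forall hgnonneg) (HasSubset.Subset.eventuallyLE hsub)
    have habs : |(∫ u in S, g u) - c| < ε := by
      rw [abs_sub_lt_iff]
      constructor
      · linarith
      · rw [abs_sub_lt_iff] at hR
        linarith [hR.2]
    exact absurd hω (not_lt.mpr (le_of_lt habs))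
  exact tendsto_of_tendsto_of_tendsto_of_le_of_le'
    tendsto_const_nhds (h1 (r/4) (by positivity))
    (Filter.Eventually.of_forall fun n => zero_le) key

end
end
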